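/- Let G be a finite graph with no twins and no universal vertices. Then G is a circular-arc graph if and only if the overlap graph G_ov admits a conformal oriented chord model. -/

import Mathlib

namespace CAIso

/-- The circle on which all models live. -/
abbrev Circle1 : Type := UnitAddCircle

variable {V : Type*}

/-- Closed neighborhood of a vertex. -/
def cnbr (G : SimpleGraph V) (v : V) : Set V := insert v {u | G.Adj v u}

/-- `G` has no twins: distinct vertices have distinct closed neighborhoods. -/
def NoTwins (G : SimpleGraph V) : Prop := ∀ u v : V, u ≠ v → cnbr G u ≠ cnbr G v

/-- `G` has no universal vertices. -/
def NoUniversal (G : SimpleGraph V) : Prop := ∀ v : V, cnbr G v ≠ Set.univ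

/-- `v di u` : non-adjacent (distinct) vertices. -/
def Di (G : SimpleGraph V) (v u : V) : Prop := v ≠ u ∧ ¬ G.Adj v u
/-- `v cs u` : `N[u] ⊊ N[v]`. -/
def Cs (G : SimpleGraph V) (v u : V) : Prop := v ≠ u ∧ cnbr G u ⊂ cnbr G v
/-- `v cd u` : `N[v] ⊊ N[u]`. -/
def Cd (G : SimpleGraph V) (v u : V) : Prop := v ≠ u ∧ cnbr G v ⊂ cnbr G u
/-- `v cc u`. -/
def Cc (G : SimpleGraph V) (v u : V) : Prop :=
  v ≠ u ∧ G.Adj v u ∧ cnbr G v ∪ cnbr G u = Set.univ ∧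
  (∀ w ∈ cnbr G v \ cnbr G u, cnbr G w ⊂ cnbr G v) ∧
  (∀ w ∈ cnbr G u \ cnbr G v, cnbr G w ⊂ cnbr G u)
/-- `v ov u` : the overlap relation `∼` of the overlap graph `G_ov`. -/
def Ov (G : SimpleGraph V) (v u : V) : Prop :=
  v ≠ u ∧ ¬ Di G v u ∧ ¬ Cs G v u ∧ ¬ Cd G v u ∧ ¬ Cc G v u
/-- `v ∥ u` : distinct and not `∼`-adjacent (complement of the overlap graph). -/
def ParR (G : SimpleGraph V) (v u : V) : Prop := v ≠ u ∧ ¬ Ov G v u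

/-- `left(v)`. -/
def leftSet (G : SimpleGraph V) (v : V) : Set V := {u | Cs G v u ∨ Cc G v u}
/-- `right(v)`. -/
def rightSet (G : SimpleGraph V) (v : V) : Set V := {u | Di G v u ∨ Cd G v u}

/-- The labeled endpoint map of a model: `(v, false)` is the first endpoint
(tail of a chord / initial endpoint of an arc, the letter `v⁰`), `(v, true)` the second
(the letter `v¹`). -/
def lep (φ : V → Circle1 × Circle1) (p : V × Bool) : Circle1 :=
  if p.2 then (φ p.1).2 else (φ p.1).1

/-- All endpoints of the objects assigned to vertices of `M` are pairwise distinct. -/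
def DistinctEndpointsOn (M : Set V) (φ : V → Circle1 × Circle1) : Prop :=
  Set.InjOn (lep φ) {p : V × Bool | p.1 ∈ M}

/-- The closed arc running in the positive direction from `c.1` to `c.2`. -/
def arcPts (c : Circle1 × Circle1) : Set Circle1 := {x | btw c.1 x c.2}
/-- The closed arc from `a` to `b` (positive direction). -/
def arcSet (a b : Circle1) : Set Circle1 := {x | btw a x b}
/-- The open arc from `a` to `b` (positive direction). -/
def oarcSet (a b : Circle1) : Set Circle1 := {x | sbtw a x b}

/-- A circular-arc model of `G`. -/
def IsCAModel (G : SimpleGraph V) (ψ : V → Circle1 × Circle1) : Prop :=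
  DistinctEndpointsOn Set.univ ψ ∧
  ∀ u v : V, u ≠ v → (G.Adj u v ↔ (arcPts (ψ u) ∩ arcPts (ψ v)).Nonempty)

/-- `G` is a circular-arc graph. -/
def IsCircularArc (G : SimpleGraph V) : Prop := ∃ ψ, IsCAModel G ψ

/-- Two arcs overlap: they intersect, neither contains the other,
and their union is not the whole circle. -/
def ArcsOverlap (c d : Circle1 × Circle1) : Prop :=
  (arcPts c ∩ arcPts d).Nonempty ∧ ¬ arcPts c ⊆ arcPts d ∧ ¬ arcPts d ⊆ arcPts c ∧
  arcPts c ∪ arcPts d ≠ Set.univ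

/-- A normalized circular-arc model of `G`. -/
def IsNormalizedModel (G : SimpleGraph V) (ψ : V → Circle1 × Circle1) : Prop :=
  IsCAModel G ψ ∧ ∀ u v : V, u ≠ v →
    ((Di G v u ↔ arcPts (ψ v) ∩ arcPts (ψ u) = ∅) ∧
     (Cs G v u ↔ arcPts (ψ u) ⊂ arcPts (ψ v)) ∧
     (Cd G v u ↔ arcPts (ψ v) ⊂ arcPts (ψ u)) ∧
     (Cc G v u ↔ arcPts (ψ v) ∪ arcPts (ψ u) = Set.univ) ∧
     (Ov G v u ↔ ArcsOverlap (ψ v) (ψ u)))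

/-- Two chords cross: each open arc determined by `c` contains exactly one endpoint of `d`. -/
def Crosses (c d : Circle1 × Circle1) : Prop :=
  (sbtw c.1 d.1 c.2 ∧ sbtw c.2 d.2 c.1) ∨ (sbtw c.1 d.2 c.2 ∧ sbtw c.2 d.1 c.1)

/-- A chord model of the relation `r` on the vertex set `M`. -/
def IsChordModelOn (r : V → V → Prop) (M : Set V) (φ : V → Circle1 × Circle1) : Prop :=
  DistinctEndpointsOn M φ ∧ ∀ u ∈ M, ∀ v ∈ M, u ≠ v → (r u v ↔ Crosses (φ u) (φ v))

/-- Chord `d` lies on the left side of the oriented chord `c = (tail, head)`: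
both endpoints of `d` lie in the open arc from the tail of `c` to the head of `c`. -/
def OnLeft (c d : Circle1 × Circle1) : Prop := sbtw c.1 d.1 c.2 ∧ sbtw c.1 d.2 c.2
/-- Chord `d` lies on the right side of the oriented chord `c`. -/
def OnRight (c d : Circle1 × Circle1) : Prop := sbtw c.2 d.1 c.1 ∧ sbtw c.2 d.2 c.1

/-- A conformal (oriented chord) model of `(M, ∼)`, where `∼` is the overlap relation of `G`. -/
def IsConformalOn (G : SimpleGraph V) (M : Set V) (φ : V → Circle1 × Circle1) : Prop :=
  IsChordModelOn (Ov G) M φ ∧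
  ∀ v ∈ M, ∀ u ∈ M, u ≠ v →
    ((u ∈ leftSet G v ↔ OnLeft (φ v) (φ u)) ∧ (u ∈ rightSet G v ↔ OnRight (φ v) (φ u)))

/-- `x ∼ M` : `x` is `∼`-adjacent to every vertex of `M`. -/
def SimAll (G : SimpleGraph V) (x : V) (M : Set V) : Prop := ∀ m ∈ M, Ov G x m
/-- `x ∥ M`. -/
def ParAll (G : SimpleGraph V) (x : V) (M : Set V) : Prop := ∀ m ∈ M, ParR G x m

/-- A module of the overlap graph `G_ov`. -/
def IsModule (G : SimpleGraph V) (M : Set V) : Prop :=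
  M.Nonempty ∧ ∀ x ∉ M, SimAll G x M ∨ ParAll G x M

/-- A strong module of `G_ov`. -/
def IsStrongModule (G : SimpleGraph V) (M : Set V) : Prop :=
  IsModule G M ∧ ∀ N, IsModule G N → N ⊆ M ∨ M ⊆ N ∨ Disjoint M N

/-- A proper module: some outside vertex is `∼`-adjacent to all of `M`. -/
def ProperModule (G : SimpleGraph V) (M : Set V) : Prop := ∃ x ∉ M, SimAll G x M

/-- `N` is a child of `M` in the modular decomposition:
a maximal strong module properly contained in `M`. -/
def IsChildOf (G : SimpleGraph V) (M N : Set V) : Prop :=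
  IsStrongModule G N ∧ N ⊂ M ∧ ∀ N', IsStrongModule G N' → N' ⊂ M → N ⊆ N' → N' = N

def NonSingleton (M : Set V) : Prop := ∃ x ∈ M, ∃ y ∈ M, x ≠ y

def ChildrenPairwiseSim (G : SimpleGraph V) (M : Set V) : Prop :=
  ∀ N₁ N₂, IsChildOf G M N₁ → IsChildOf G M N₂ → N₁ ≠ N₂ → ∀ x ∈ N₁, ∀ y ∈ N₂, Ov G x y
def ChildrenPairwisePar (G : SimpleGraph V) (M : Set V) : Prop :=
  ∀ N₁ N₂, IsChildOf G M N₁ → IsChildOf G M N₂ → N₁ ≠ N₂ → ∀ x ∈ N₁, ∀ y ∈ N₂, ParR G x y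

/-- A serial strong module of the modular decomposition of `G_ov`. -/
def SerialM (G : SimpleGraph V) (M : Set V) : Prop :=
  IsStrongModule G M ∧ NonSingleton M ∧ ChildrenPairwiseSim G M
/-- A parallel strong module. -/
def ParallelM (G : SimpleGraph V) (M : Set V) : Prop :=
  IsStrongModule G M ∧ NonSingleton M ∧ ChildrenPairwisePar G M
/-- A prime strong module (neither serial nor parallel). -/
def PrimeM (G : SimpleGraph V) (M : Set V) : Prop :=
  IsStrongModule G M ∧ NonSingleton M ∧ ¬ ChildrenPairwiseSim G M ∧ ¬ ChildrenPairwisePar G M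

/-- The graph induced by the (symmetrized) relation `r` on the set `M` is connected. -/
def ConnOn (r : V → V → Prop) (M : Set V) : Prop :=
  M.Nonempty ∧ ∀ ⦃x⦄, x ∈ M → ∀ ⦃y⦄, y ∈ M →
    Relation.ReflTransGen (fun a b => a ∈ M ∧ b ∈ M ∧ (r a b ∨ r b a)) x y

/-- `N[M]`, the set of outside vertices `∼`-adjacent to all of `M`. -/
def nbrMod (G : SimpleGraph V) (M : Set V) : Set V := {x | x ∉ M ∧ SimAll G x M}

/-- `C[M]`, the vertex set of the connected component of `G_ov` containing `M`. -/
def compOf (G : SimpleGraph V) (M : Set V) : Set V :=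
  {x | ∃ m ∈ M, Relation.ReflTransGen (fun a b => Ov G a b ∨ Ov G b a) x m}

/-- The set of endpoints of the chords/arcs of the vertices in `A`. -/
def eptSet (φ : V → Circle1 × Circle1) (A : Set V) : Set Circle1 :=
  {x | ∃ p : V × Bool, p.1 ∈ A ∧ lep φ p = x}

/-- The set of circle points realizing a set of labeled letters. -/
def lepIm (φ : V → Circle1 × Circle1) (P : Set (V × Bool)) : Set Circle1 :=
  {x | ∃ p ∈ P, lep φ p = x}

/-- `X` is contiguous in `Y`: `X = Y ∩ A` for a circular arc `A`. -/
def ContiguousIn (X Y : Set Circle1) : Prop := ∃ a b : Circle1, a ≠ b ∧ X = Y ∩ arcSet a b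

/-- `X` forms two contiguous blocks in `Y`. -/
def TwoBlocks (Y X : Set Circle1) : Prop :=
  ∃ X₁ X₂ : Set Circle1, X₁.Nonempty ∧ X₂.Nonempty ∧ Disjoint X₁ X₂ ∧ X₁ ∪ X₂ = X ∧
    ContiguousIn X₁ Y ∧ ContiguousIn X₂ Y

/-- The endpoints of `M` form two contiguous blocks, given by the arcs `(a,b)` and `(a',b')`,
within the endpoints of `Y`, each block containing exactly one endpoint of each chord of `M`. -/
def BlockDecomp (φ : V → Circle1 × Circle1) (Y M : Set V) (a b a' b' : Circle1) : Prop :=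
  a ≠ b ∧ a' ≠ b' ∧
  a ∉ eptSet φ Y ∧ b ∉ eptSet φ Y ∧ a' ∉ eptSet φ Y ∧ b' ∉ eptSet φ Y ∧
  Disjoint (eptSet φ Y ∩ arcSet a b) (eptSet φ Y ∩ arcSet a' b') ∧
  (eptSet φ Y ∩ arcSet a b) ∪ (eptSet φ Y ∩ arcSet a' b') = eptSet φ M ∧
  ∀ v ∈ M, (lep φ (v, false) ∈ arcSet a b ∧ lep φ (v, true) ∈ arcSet a' b') ∨
           (lep φ (v, false) ∈ arcSet a' b' ∧ lep φ (v, true) ∈ arcSet a b)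

/-- Reading order along the arc `(a,b)`: some endpoint of `u` inside the arc
precedes some endpoint of `w` inside the arc. -/
def rdOrd (φ : V → Circle1 × Circle1) (a b : Circle1) (u w : V) : Prop :=
  ∃ p q : Bool, lep φ (u, p) ∈ arcSet a b ∧ lep φ (w, q) ∈ arcSet a b ∧
    lep φ (u, p) ≠ lep φ (w, q) ∧ btw a (lep φ (u, p)) (lep φ (w, q))

/-- The letter of `u` belonging to `P` precedes the letter of `w` belonging to `P`,
reading from the point `a` in the positive direction. -/
def precInSet (φ : V → Circle1 × Circle1) (P : Set (V × Bool)) (a : Circle1) (u w : V) : Prop :=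
  ∃ p q : Bool, (u, p) ∈ P ∧ (w, q) ∈ P ∧ lep φ (u, p) ≠ lep φ (w, q) ∧
    btw a (lep φ (u, p)) (lep φ (w, q))

/-- `r` is a strict linear order on the set `M`. -/
def IsLinOrderOn (M : Set V) (r : V → V → Prop) : Prop :=
  (∀ x ∈ M, ¬ r x x) ∧
  (∀ x ∈ M, ∀ y ∈ M, ∀ z ∈ M, r x y → r y z → r x z) ∧
  (∀ x ∈ M, ∀ y ∈ M, x ≠ y → (r x y ↔ ¬ r y x))

/-- `(r₁, r₂)` is a permutation model of the graph `(M, adj)`. -/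
def IsPermModelOn (adj : V → V → Prop) (M : Set V) (r₁ r₂ : V → V → Prop) : Prop :=
  IsLinOrderOn M r₁ ∧ IsLinOrderOn M r₂ ∧
  ∀ x ∈ M, ∀ y ∈ M, x ≠ y → (adj x y ↔ (r₁ x y ↔ r₂ x y))

/-- `r` is an orientation of the edges `E` restricted to `M`. -/
def IsOrientationOn (E : V → V → Prop) (M : Set V) (r : V → V → Prop) : Prop :=
  (∀ x y, r x y → x ∈ M ∧ y ∈ M ∧ E x y) ∧
  (∀ x ∈ M, ∀ y ∈ M, E x y → (r x y ↔ ¬ r y x))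

/-- `r` is a transitive orientation of the edges `E` restricted to `M`. -/
def IsTransOrientOn (E : V → V → Prop) (M : Set V) (r : V → V → Prop) : Prop :=
  IsOrientationOn E M r ∧ ∀ x y z, r x y → r y z → r x z

/-- The cyclic betweenness of three labeled endpoints of a model. -/
def sb3 (φ : V → Circle1 × Circle1) (p q r : V × Bool) : Prop :=
  sbtw (lep φ p) (lep φ q) (lep φ r)

/-- Equivalence of oriented chord models restricted to `M` (equal circular words
over the labeled letters). -/
def OEquivOn (M : Set V) (φ ψ : V → Circle1 × Circle1) : Prop :=
  ∀ p q r : V × Bool, p.1 ∈ M → q.1 ∈ M → r.1 ∈ M → (sb3 φ p q r ↔ sb3 ψ p q r)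

def flipB : V × Bool → V × Bool := fun p => (p.1, !p.2)

/-- `ψ` is (equivalent to) the reflection of `φ` on `M`: the circular word of `ψ`
is the reverse of that of `φ` with `v⁰` and `v¹` exchanged. -/
def OReflOn (M : Set V) (φ ψ : V → Circle1 × Circle1) : Prop :=
  ∀ p q r : V × Bool, p.1 ∈ M → q.1 ∈ M → r.1 ∈ M →
    (sb3 φ p q r ↔ sb3 ψ (flipB r) (flipB q) (flipB p))

def swapBy (h : V → Bool) : V × Bool → V × Bool := fun p => (p.1, xor p.2 (h p.1))

/-- Equivalence of (non-oriented) chord models: equal circular word representations. -/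
def UEquiv (φ ψ : V → Circle1 × Circle1) : Prop :=
  ∃ h : V → Bool, ∀ p q r : V × Bool,
    sb3 φ p q r ↔ sb3 ψ (swapBy h p) (swapBy h q) (swapBy h r)

/-- `ψ` is equivalent to the reflection of the (non-oriented) chord model `φ`. -/
def UReflEquiv (φ ψ : V → Circle1 × Circle1) : Prop :=
  ∃ h : V → Bool, ∀ p q r : V × Bool,
    sb3 φ p q r ↔ sb3 ψ (swapBy h r) (swapBy h q) (swapBy h p)

/-- The sets `S 0, …, S (n-1)` appear in this circular order around the circle:
there are cut points, in cyclic order, such that `S i` lies in the `i`-th gap. -/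
def SetsInCyclicOrder (n : ℕ) (S : ℕ → Set Circle1) : Prop :=
  ∃ r : ℕ → ℝ,
    (∀ i j, i < j → j < n → r i < r j) ∧
    (∀ i, i < n → ∀ j, j < n → r i < r j + 1) ∧
    ∀ i, i < n → ∀ x ∈ S i, sbtw ((r i : ℝ) : Circle1) x ((r ((i + 1) % n) : ℝ) : Circle1)

/-- A split `(A, α(A), B, α(B))` of the graph `G`. -/
def IsSplit (G : SimpleGraph V) (A aA B aB : Set V) : Prop :=
  A.Nonempty ∧ B.Nonempty ∧
  Disjoint A aA ∧ Disjoint A B ∧ Disjoint A aB ∧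
  Disjoint aA B ∧ Disjoint aA aB ∧ Disjoint B aB ∧
  A ∪ aA ∪ B ∪ aB = Set.univ ∧
  (∀ a ∈ A, ∀ b ∈ B, G.Adj a b) ∧
  (∀ x ∈ aA, ∀ y ∈ B ∪ aB, ¬ G.Adj x y) ∧
  (∀ x ∈ aB, ∀ y ∈ A ∪ aA, ¬ G.Adj x y)

/-- A non-trivial split. -/
def NontrivialSplit (G : SimpleGraph V) (A aA B aB : Set V) : Prop :=
  IsSplit G A aA B aB ∧ 1 < (A ∪ aA).ncard ∧ 1 < (B ∪ aB).ncard

/-- The metaedge `(M⁰, M¹, <_M)` of the module `M` with representant `rep`: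
`M⁰, M¹` partition the labeled letters of `M` (one letter of each vertex on each side,
with `rep⁰ ∈ M⁰`), `<_M` is a transitive orientation of `(M, ∥)`, and in every conformal
model of `G_ov`, for every decomposition of the letters of `M` into two contiguous blocks
among the letters of `C[M]` whose first block contains `rep⁰`, the first block consists
exactly of the letters `M⁰`, the second of `M¹`, and the reading order of the first block
restricted to `∥`-pairs is exactly `<_M`. -/
def IsMetaedge (G : SimpleGraph V) (M : Set V) (rep : V)
    (M0 M1 : Set (V × Bool)) (lt : V → V → Prop) : Prop :=
  M0 ∪ M1 = {p : V × Bool | p.1 ∈ M} ∧ Disjoint M0 M1 ∧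
  (∀ v ∈ M, ((v, false) ∈ M0 ↔ (v, true) ∈ M1)) ∧
  (rep, false) ∈ M0 ∧
  IsTransOrientOn (ParR G) M lt ∧
  ∀ φ : V → Circle1 × Circle1, IsConformalOn G Set.univ φ →
    ∀ a b a' b' : Circle1, BlockDecomp φ (compOf G M) M a b a' b' →
      lep φ (rep, false) ∈ arcSet a b →
      ((∀ p : V × Bool, p.1 ∈ M →
          ((p ∈ M0 ↔ lep φ p ∈ arcSet a b) ∧ (p ∈ M1 ↔ lep φ p ∈ arcSet a' b'))) ∧
       ∀ x ∈ M, ∀ y ∈ M, ParR G x y → (lt x y ↔ precInSet φ M0 a x y))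

/-- In the model `φ`, the letters `W0` are placed in the open arc `(c0, d0)`, the letters
`W1` in the open arc `(c1, d1)`, and the two induced reading orders form an (admissible)
oriented permutation model of `(Wset, ∼)` whose first order agrees with `lt` on `∥`-pairs. -/
def AdmissiblePlacedAt (G : SimpleGraph V) (φ : V → Circle1 × Circle1)
    (Wset : Set V) (W0 W1 : Set (V × Bool)) (lt : V → V → Prop)
    (c0 d0 c1 d1 : Circle1) : Prop :=
  (∀ p ∈ W0, sbtw c0 (lep φ p) d0) ∧
  (∀ p ∈ W1, sbtw c1 (lep φ p) d1) ∧
  (∀ x ∈ Wset, ∀ y ∈ Wset, x ≠ y →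
    (Ov G x y ↔ (precInSet φ W0 c0 x y ↔ precInSet φ W1 c1 x y))) ∧
  (∀ x ∈ Wset, ∀ y ∈ Wset, ParR G x y → (lt x y ↔ precInSet φ W0 c0 x y))

/-- An improper prime strong module: `(M,∼)` and `(M,∥)` are connected
and no outside vertex is `∼`-adjacent to all of `M`. -/
def ImproperPrime (G : SimpleGraph V) (M : Set V) : Prop :=
  IsStrongModule G M ∧ ConnOn (Ov G) M ∧ ConnOn (ParR G) M ∧ ¬ ProperModule G M

/-- `U` is a transversal of `M`: it contains exactly one vertex of each child of `M`. -/
def IsTransversal (G : SimpleGraph V) (M U : Set V) : Prop :=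
  U ⊆ M ∧ (∀ N, IsChildOf G M N → ∃! u, u ∈ U ∩ N) ∧
  ∀ u ∈ U, ∃ N, IsChildOf G M N ∧ u ∈ N

/-- A probe `(y, x, X, α(X))` in the graph `(Uset, ∼)`. -/
def IsProbe (G : SimpleGraph V) (Uset : Set V) (y x : V) (X aX : Set V) : Prop :=
  x ≠ y ∧ X.Nonempty ∧ aX.Nonempty ∧
  Disjoint ({x, y} : Set V) X ∧ Disjoint ({x, y} : Set V) aX ∧ Disjoint X aX ∧
  ({x, y} ∪ X ∪ aX) ⊂ Uset ∧
  Ov G y x ∧ (∀ z ∈ X ∪ aX, ParR G y z) ∧ (∀ z ∈ X, Ov G x z) ∧ (∀ z ∈ aX, ParR G x z) ∧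
  ConnOn (Ov G) ({x, y} ∪ X ∪ aX) ∧
  ∀ z ∈ Uset \ ({x, y} ∪ X ∪ aX),
    (∀ w ∈ X ∪ aX, ParR G z w) ∨ ((∀ w ∈ X, Ov G z w) ∧ ∀ w ∈ aX, ParR G z w) ∨
    (∀ w ∈ X ∪ aX, Ov G z w)

/-- The `K`-relation on a child `Mi` of an improper prime module, relative to the
transversal `U`; its equivalence classes are the consistent submodules. -/
def KrelOn (G : SimpleGraph V) (U Mi : Set V) (v v' : V) : Prop :=
  v ∈ Mi ∧ v' ∈ Mi ∧
  (v = v' ∨ PrimeM G Mi ∨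
   (ParallelM G Mi ∧ ∀ u ∈ U \ Mi,
      (v ∈ leftSet G u ∧ v' ∈ leftSet G u) ∨ (v ∈ rightSet G u ∧ v' ∈ rightSet G u)) ∨
   (SerialM G Mi ∧
      ({leftSet G v ∩ (U \ Mi), rightSet G v ∩ (U \ Mi)} : Set (Set V)) =
       {leftSet G v' ∩ (U \ Mi), rightSet G v' ∩ (U \ Mi)}))

/-- `M` is the vertex set of a connected component of `G_ov`. -/
def IsCompOf (G : SimpleGraph V) (M : Set V) : Prop :=
  ∃ v, M = {u | Relation.ReflTransGen (fun a b => Ov G a b ∨ Ov G b a) v u}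

/-- `v` separates the modules `M₁` and `M₂`. -/
def Separates (G : SimpleGraph V) (v : V) (M₁ M₂ : Set V) : Prop :=
  v ∉ M₁ ∪ M₂ ∧
  ((M₁ ⊆ leftSet G v ∧ M₂ ⊆ rightSet G v) ∨ (M₂ ⊆ leftSet G v ∧ M₁ ⊆ rightSet G v))

def NonSep (G : SimpleGraph V) (M₁ M₂ : Set V) : Prop := ¬ ∃ v, Separates G v M₁ M₂

/-- A node: a maximal set of pairwise non-separated components of `G_ov`. -/
def IsNode (G : SimpleGraph V) (N : Set (Set V)) : Prop :=
  (∀ M ∈ N, IsCompOf G M) ∧ (∀ M₁ ∈ N, ∀ M₂ ∈ N, NonSep G M₁ M₂) ∧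
  (∀ M', IsCompOf G M' → (∀ M ∈ N, NonSep G M' M) → M' ∈ N)

/-- The vertex set of the bipartite graph `T_NM` : modules (components of `G_ov`) on the
left, nodes on the right. -/
def TVert (G : SimpleGraph V) : Type _ :=
  {M : Set V // IsCompOf G M} ⊕ {N : Set (Set V) // IsNode G N}

/-- The bipartite graph `T_NM`. -/
def TNM (G : SimpleGraph V) : SimpleGraph (TVert G) where
  Adj x y :=
    match x, y with
    | Sum.inl M, Sum.inr N => M.1 ∈ N.1
    | Sum.inr N, Sum.inl M => M.1 ∈ N.1
    | _, _ => False
  symm := ⟨by rintro (M | N) (M' | N') h <;> exact h⟩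
  loopless := ⟨by rintro (M | N) h <;> exact h⟩

/-- The set of vertices of `G` contained in the modules lying in the connected component
of `T_NM − x₀` containing `y`. -/
def VTavoid (G : SimpleGraph V) (x₀ y : TVert G) : Set V :=
  {u | ∃ M : {M : Set V // IsCompOf G M},
    Relation.ReflTransGen (fun a c => (TNM G).Adj a c ∧ a ≠ x₀ ∧ c ≠ x₀) y (Sum.inl M) ∧
    u ∈ M.1}

/-! ### Toolkit : coordinates on the circle -/

section Gp

open QuotientAddGroup

lemma coe_sub_circle (x y : ℝ) : ((x - y : ℝ) : Circle1) = (x : Circle1) - (y : Circle1) :=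
  rfl

lemma coe_add_circle (x y : ℝ) : ((x + y : ℝ) : Circle1) = (x : Circle1) + (y : Circle1) :=
  rfl

/-- The length of the positive arc from `a` to `b`, in `[0,1)`. -/
noncomputable def gp (a b : Circle1) : ℝ :=
  (equivIcoMod (α := ℝ) (p := 1) one_pos 0 (b - a) : ℝ)

lemma gp_nonneg (a b : Circle1) : 0 ≤ gp a b :=
  (equivIcoMod (α := ℝ) (p := 1) one_pos 0 (b - a)).2.1

lemma gp_lt_one (a b : Circle1) : gp a b < 1 := by
  have h := (equivIcoMod (α := ℝ) (p := 1) one_pos 0 (b - a)).2.2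
  exact lt_of_lt_of_eq h (zero_add 1)

lemma gp_coe (x y : ℝ) : gp (x : Circle1) (y : Circle1) = toIcoMod one_pos 0 (y - x) := by
  unfold gp
  rw [← coe_sub_circle, equivIcoMod_coe]

lemma coe_int_circle (k : ℤ) : ((k : ℝ) : Circle1) = 0 := by
  rw [QuotientAddGroup.eq_zero_iff]
  exact ⟨k, by simp⟩

lemma gp_rep (a b : Circle1) : ((gp a b : ℝ) : Circle1) = b - a := by
  induction a using QuotientAddGroup.induction_on with
  | H x =>
  induction b using QuotientAddGroup.induction_on with
  | H y =>
  rw [gp_coe]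
  have h : toIcoMod one_pos 0 (y - x) = (y - x) - (toIcoDiv one_pos 0 (y - x) : ℝ) := by
    have := (self_sub_toIcoDiv_zsmul one_pos 0 (y - x)).symm
    simpa using this
  rw [h, coe_sub_circle, coe_int_circle, coe_sub_circle]
  abel

lemma gp_rep' (a b : Circle1) : a + ((gp a b : ℝ) : Circle1) = b := by
  rw [gp_rep]; abel

lemma gp_self (a : Circle1) : gp a a = 0 := by
  induction a using QuotientAddGroup.induction_on with
  | H x => rw [gp_coe]; simp [toIcoMod_apply_left]

lemma gp_eq_zero_iff {a b : Circle1} : gp a b = 0 ↔ a = b := by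
  constructor
  · intro h
    have h2 := gp_rep a b
    rw [h] at h2
    have : b - a = 0 := by simpa using h2.symm
    exact (sub_eq_zero.mp this).symm
  · rintro rfl; exact gp_self a

lemma gp_inj {a x y : Circle1} (h : gp a x = gp a y) : x = y := by
  have h1 := gp_rep a x
  have h2 := gp_rep a y
  rw [h, h2] at h1
  exact sub_left_inj.mp h1.symm

lemma gp_pos {a b : Circle1} (h : a ≠ b) : 0 < gp a b :=
  lt_of_le_of_ne (gp_nonneg a b) (fun h' => h (gp_eq_zero_iff.mp h'.symm))

lemma gp_add_real (a : Circle1) {t : ℝ} (h0 : 0 ≤ t) (h1 : t < 1) :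
    gp a (a + (t : Circle1)) = t := by
  have h : (a + (t : Circle1)) - a = ((t : ℝ) : Circle1) := by abel
  unfold gp
  rw [h, equivIcoMod_coe]
  show toIcoMod one_pos 0 t = t
  exact (toIcoMod_eq_self one_pos).mpr ⟨h0, by simpa using h1⟩

lemma gp_cocycle (a b c : Circle1) :
    gp a b + gp b c = gp a c ∨ gp a b + gp b c = gp a c + 1 := by
  have hrep : ((gp a b + gp b c - gp a c : ℝ) : Circle1) = 0 := by
    rw [coe_sub_circle, coe_add_circle, gp_rep, gp_rep, gp_rep]
    abel
  rw [QuotientAddGroup.eq_zero_iff] at hrep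
  obtain ⟨k, hk⟩ := hrep
  have hkr : (k : ℝ) = gp a b + gp b c - gp a c := by simpa using hk
  have hk1 : -1 < k := by
    have h1 : (-1 : ℝ) < (k : ℝ) := by
      have := gp_nonneg a b; have := gp_nonneg b c; have := gp_lt_one a c
      rw [hkr]; linarith
    exact_mod_cast h1
  have hk2 : k < 2 := by
    have h2 : (k : ℝ) < 2 := by
      have := gp_lt_one a b; have := gp_lt_one b c; have := gp_nonneg a c
      rw [hkr]; linarith
    exact_mod_cast h2
  interval_cases k
  · left; push_cast at hkr; linarith
  · right; push_cast at hkr; linarith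

lemma gp_anti {a b : Circle1} (h : a ≠ b) : gp a b + gp b a = 1 := by
  rcases gp_cocycle a b a with h' | h'
  · exfalso
    rw [gp_self] at h'
    have := gp_pos h; have := gp_pos (Ne.symm h); linarith
  · rw [gp_self] at h'; linarith

lemma btw_iff_gp {a b : Circle1} (h : a ≠ b) (x : Circle1) :
    btw a x b ↔ gp a x ≤ gp a b := by
  induction a using QuotientAddGroup.induction_on with
  | H a' =>
  induction b using QuotientAddGroup.induction_on with
  | H b' =>
  induction x using QuotientAddGroup.induction_on with
  | H x' =>
  rw [btw_coe_iff']
  rw [gp_coe, gp_coe]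
  have hne : ¬ (0 : ℝ) ≡ (b' - a') [PMOD (1:ℝ)] := by
    intro hmod
    obtain ⟨z, w, hz⟩ := hmod
    apply h
    have h0 : ((b' - a' : ℝ) : Circle1) = 0 := by
      rw [QuotientAddGroup.eq_zero_iff]
      exact ⟨z - w, by simp at hz ⊢; linarith⟩
    rw [coe_sub_circle] at h0
    exact (sub_eq_zero.mp h0).symm
  rw [← (AddCommGroup.not_modEq_iff_toIcoMod_eq_toIocMod one_pos).mp hne]

lemma btw_self_right (a x : Circle1) : btw a x a := btw_refl_left_right a x

lemma sbtw_iff_gp {a b : Circle1} (h : a ≠ b) (x : Circle1) :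
    sbtw a x b ↔ 0 < gp a x ∧ gp a x < gp a b := by
  rw [sbtw_iff_btw_not_btw, btw_iff_gp h]
  by_cases hxa : x = a
  · subst hxa
    simp [gp_self, btw_rfl_right, le_of_lt (gp_pos h)]
  by_cases hxb : x = b
  · subst hxb
    constructor
    · rintro ⟨_, hn⟩
      exact absurd btw_rfl_left hn
    · rintro ⟨_, hlt⟩
      exact absurd hlt (lt_irrefl _)
  · rw [btw_iff_gp (Ne.symm h)]
    have hax := gp_pos (Ne.symm hxa : a ≠ x)
    have hanti := gp_anti h
    rcases gp_cocycle a b x with hc | hc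
    · constructor
      · rintro ⟨h1, h2⟩
        exfalso
        apply h2
        have hbx := gp_pos (Ne.symm hxb : b ≠ x)
        linarith
      · rintro ⟨h1, h2⟩
        exfalso
        have hbx := gp_pos (Ne.symm hxb : b ≠ x)
        linarith
    · constructor
      · rintro ⟨h1, h2⟩
        refine ⟨hax, lt_of_le_of_ne h1 ?_⟩
        intro heq
        exact hxb (gp_inj heq)
      · rintro ⟨h1, h2⟩
        refine ⟨le_of_lt h2, ?_⟩
        intro hba
        linarith

end Gp

section Frame

/-- Strict cyclic order of three reals (coordinates). -/
def cyc (x y z : ℝ) : Prop := (x < y ∧ y < z) ∨ (y < z ∧ z < x) ∨ (z < x ∧ x < y)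

lemma gp_eq_sub {z a x : Circle1} (h : gp z a ≤ gp z x) : gp a x = gp z x - gp z a := by
  rcases gp_cocycle z a x with hc | hc
  · linarith
  · exfalso
    have := gp_lt_one a x
    linarith

lemma gp_eq_sub' {z a x : Circle1} (h : gp z x < gp z a) : gp a x = gp z x - gp z a + 1 := by
  rcases gp_cocycle z a x with hc | hc
  · exfalso
    have := gp_nonneg a x
    linarith
  · linarith

lemma gp_frame_inj {z x y : Circle1} (h : gp z x = gp z y) : x = y := gp_inj h

lemma gp_ne {z : Circle1} {x y : Circle1} (h : x ≠ y) : gp z x ≠ gp z y :=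
  fun h' => h (gp_inj h')

lemma sbtw_iff_cyc (z : Circle1) {u v w : Circle1} (huv : u ≠ v) (hvw : v ≠ w) (huw : u ≠ w) :
    sbtw u v w ↔ cyc (gp z u) (gp z v) (gp z w) := by
  have hUV := gp_ne (z := z) huv
  have hVW := gp_ne (z := z) hvw
  have hUW := gp_ne (z := z) huw
  rw [sbtw_iff_gp huw]
  have b1 := gp_nonneg z u; have b2 := gp_lt_one z u
  have b3 := gp_nonneg z v; have b4 := gp_lt_one z v
  have b5 := gp_nonneg z w; have b6 := gp_lt_one z w
  set U := gp z u with hU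
  set V := gp z v with hV
  set W := gp z w with hW
  rcases le_or_gt U V with h1 | h1
  · have hv : gp u v = V - U := gp_eq_sub h1
    rcases le_or_gt U W with h2 | h2
    · have hw : gp u w = W - U := gp_eq_sub h2
      rw [hv, hw]
      unfold cyc
      constructor
      · rintro ⟨p1, p2⟩
        left
        exact ⟨lt_of_le_of_ne (by linarith) hUV, by linarith⟩
      · rintro (⟨p1, p2⟩ | ⟨p1, p2⟩ | ⟨p1, p2⟩) <;>
          first
          | exact ⟨by linarith, by linarith⟩
          | (exfalso; linarith)
    · have hw : gp u w = W - U + 1 := gp_eq_sub' h2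
      rw [hv, hw]
      unfold cyc
      have hV1 := gp_lt_one z v
      have hW0 := gp_nonneg z w
      constructor
      · rintro ⟨p1, p2⟩
        right; right
        exact ⟨h2, lt_of_le_of_ne (by linarith) hUV⟩
      · rintro (⟨p1, p2⟩ | ⟨p1, p2⟩ | ⟨p1, p2⟩) <;>
          first
          | exact ⟨by linarith, by linarith⟩
          | (exfalso; linarith)
  · have hv : gp u v = V - U + 1 := gp_eq_sub' h1
    rcases le_or_gt U W with h2 | h2
    · have hw : gp u w = W - U := gp_eq_sub h2
      rw [hv, hw]
      unfold cyc
      have hW1 := gp_lt_one z w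
      have hV0 := gp_nonneg z v
      constructor
      · rintro ⟨p1, p2⟩
        exfalso; linarith
      · rintro (⟨p1, p2⟩ | ⟨p1, p2⟩ | ⟨p1, p2⟩) <;> (exfalso; linarith)
    · have hw : gp u w = W - U + 1 := gp_eq_sub' h2
      rw [hv, hw]
      unfold cyc
      constructor
      · rintro ⟨p1, p2⟩
        right; left
        exact ⟨lt_of_le_of_ne (by linarith) hVW, h2⟩
      · rintro (⟨p1, p2⟩ | ⟨p1, p2⟩ | ⟨p1, p2⟩) <;>
          first
          | exact ⟨by linarith, by linarith⟩
          | (exfalso; linarith)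

lemma mem_arcSet_iff {a b : Circle1} (h : a ≠ b) (x : Circle1) :
    x ∈ arcSet a b ↔ gp a x ≤ gp a b := btw_iff_gp h x

lemma mem_arcPts_iff {c : Circle1 × Circle1} (h : c.1 ≠ c.2) (x : Circle1) :
    x ∈ arcPts c ↔ gp c.1 x ≤ gp c.1 c.2 := btw_iff_gp h x

/-- Membership in an arc, in the coordinates of an arbitrary frame `z`. -/
lemma mem_arcSet_frame (z : Circle1) {a b : Circle1} (h : a ≠ b) (x : Circle1) :
    x ∈ arcSet a b ↔
      (if gp z a ≤ gp z b then gp z a ≤ gp z x ∧ gp z x ≤ gp z b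
       else gp z a ≤ gp z x ∨ gp z x ≤ gp z b) := by
  rw [mem_arcSet_iff h]
  have hX1 := gp_lt_one z x
  have hX0 := gp_nonneg z x
  have hB1 := gp_lt_one z b
  have hB0 := gp_nonneg z b
  have hA0 := gp_nonneg z a
  rcases le_or_gt (gp z a) (gp z x) with h1 | h1
  · have hx : gp a x = gp z x - gp z a := gp_eq_sub h1
    rcases le_or_gt (gp z a) (gp z b) with h2 | h2
    · have hb : gp a b = gp z b - gp z a := gp_eq_sub h2
      rw [hx, hb, if_pos h2]
      constructor
      · intro hh; exact ⟨h1, by linarith⟩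
      · rintro ⟨_, hh⟩; linarith
    · have hb : gp a b = gp z b - gp z a + 1 := gp_eq_sub' h2
      rw [hx, hb, if_neg (not_le.mpr h2)]
      constructor
      · intro _; left; exact h1
      · intro _; linarith
  · have hx : gp a x = gp z x - gp z a + 1 := gp_eq_sub' h1
    rcases le_or_gt (gp z a) (gp z b) with h2 | h2
    · have hb : gp a b = gp z b - gp z a := gp_eq_sub h2
      rw [hx, hb, if_pos h2]
      constructor
      · intro hh; exfalso; linarith
      · rintro ⟨hh, _⟩; exfalso; linarith
    · have hb : gp a b = gp z b - gp z a + 1 := gp_eq_sub' h2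
      rw [hx, hb, if_neg (not_le.mpr h2)]
      constructor
      · intro hh; right; linarith
      · rintro (hh | hh)
        · exfalso; linarith
        · linarith

/-- The point of the circle at coordinate `t` in the frame of `z`. -/
noncomputable def pm (z : Circle1) (t : ℝ) : Circle1 := z + (t : Circle1)

lemma gp_pm (z : Circle1) {t : ℝ} (h0 : 0 ≤ t) (h1 : t < 1) : gp z (pm z t) = t :=
  gp_add_real z h0 h1

lemma pm_gp (z x : Circle1) : pm z (gp z x) = x := gp_rep' z x

lemma pm_inj {z : Circle1} {s t : ℝ} (h0 : 0 ≤ s) (h1 : s < 1) (h0' : 0 ≤ t) (h1' : t < 1)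
    (h : pm z s = pm z t) : s = t := by
  have : gp z (pm z s) = gp z (pm z t) := by rw [h]
  rw [gp_pm z h0 h1, gp_pm z h0' h1'] at this
  exact this

lemma exists_avoid (S : Finset ℝ) {x y : ℝ} (h : x < y) :
    ∃ t : ℝ, x < t ∧ t < y ∧ t ∉ S := by
  have : (Set.Ioo x y).Infinite := Set.infinite_coe_iff.mp (Set.Ioo.infinite h)
  obtain ⟨t, ht, hts⟩ := this.exists_notMem_finset S
  exact ⟨t, ht.1, ht.2, hts⟩

end Frame

section ChordGeometry

variable {a b p q : Circle1}

private lemma sAXB (hab : a ≠ b) (x : Circle1) :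
    sbtw a x b ↔ 0 < gp a x ∧ gp a x < gp a b := sbtw_iff_gp hab x

private lemma sBPA (hab : a ≠ b) (hbp : b ≠ p) (hap : a ≠ p) :
    sbtw b p a ↔ gp a b < gp a p := by
  rw [sbtw_iff_cyc a hbp (Ne.symm hap) (Ne.symm hab), gp_self]
  have h1 := gp_nonneg a p
  have h2 := gp_pos hab
  unfold cyc
  constructor
  · rintro (⟨u1, u2⟩ | ⟨u1, u2⟩ | ⟨u1, u2⟩) <;> linarith
  · intro h; right; right; exact ⟨h2, h⟩

private lemma sQAP (hap : a ≠ p) (haq : a ≠ q) (hpq : p ≠ q) :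
    sbtw q a p ↔ gp a p < gp a q := by
  rw [sbtw_iff_cyc a (Ne.symm haq) hap (Ne.symm hpq), gp_self]
  have h1 := gp_pos hap
  have h2 := gp_pos haq
  unfold cyc
  constructor
  · rintro (⟨u1, u2⟩ | ⟨u1, u2⟩ | ⟨u1, u2⟩) <;> linarith
  · intro h; right; left; exact ⟨h1, h⟩

private lemma sQBP (hbq : b ≠ q) (hbp : b ≠ p) (hpq : p ≠ q) :
    sbtw q b p ↔ cyc (gp a q) (gp a b) (gp a p) :=
  sbtw_iff_cyc a (Ne.symm hbq) hbp (Ne.symm hpq)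

private lemma memAB (hab : a ≠ b) (x : Circle1) : x ∈ arcSet a b ↔ gp a x ≤ gp a b :=
  mem_arcSet_iff hab x

private lemma memPQ (hpq : p ≠ q) (x : Circle1) :
    x ∈ arcSet p q ↔
      (if gp a p ≤ gp a q then gp a p ≤ gp a x ∧ gp a x ≤ gp a q
       else gp a p ≤ gp a x ∨ gp a x ≤ gp a q) :=
  mem_arcSet_frame a hpq x

private lemma onLeft_iff (hab : a ≠ b) :
    OnLeft (a, b) (p, q) ↔
      (0 < gp a p ∧ gp a p < gp a b) ∧ (0 < gp a q ∧ gp a q < gp a b) := by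
  show sbtw a p b ∧ sbtw a q b ↔ _
  rw [sAXB hab, sAXB hab]

private lemma onRight_iff (hab : a ≠ b) (hap : a ≠ p) (haq : a ≠ q) (hbp : b ≠ p)
    (hbq : b ≠ q) :
    OnRight (a, b) (p, q) ↔ gp a b < gp a p ∧ gp a b < gp a q := by
  show sbtw b p a ∧ sbtw b q a ↔ _
  rw [sBPA hab hbp hap, sBPA hab hbq haq]

private lemma crosses_iff (hab : a ≠ b) (hap : a ≠ p) (haq : a ≠ q) (hbp : b ≠ p)
    (hbq : b ≠ q) :
    Crosses (a, b) (p, q) ↔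
      (gp a p < gp a b ∧ gp a b < gp a q) ∨ (gp a q < gp a b ∧ gp a b < gp a p) := by
  show (sbtw a p b ∧ sbtw b q a) ∨ (sbtw a q b ∧ sbtw b p a) ↔ _
  rw [sAXB hab, sAXB hab, sBPA hab hbp hap, sBPA hab hbq haq]
  have h1 := gp_pos hap
  have h2 := gp_pos haq
  constructor
  · rintro (⟨⟨u1, u2⟩, u3⟩ | ⟨⟨u1, u2⟩, u3⟩)
    · exact Or.inl ⟨u2, u3⟩
    · exact Or.inr ⟨u2, u3⟩
  · rintro (⟨u1, u2⟩ | ⟨u1, u2⟩)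
    · exact Or.inl ⟨⟨h1, u1⟩, u2⟩
    · exact Or.inr ⟨⟨h2, u1⟩, u2⟩

/-- If both endpoints of `d` avoid the arc of `c`, then `d` is on the right of `c`. -/
lemma geom_onRight_of_notMem (hab : a ≠ b) (hap : a ≠ p) (haq : a ≠ q) (hbp : b ≠ p)
    (hbq : b ≠ q) (hp : p ∉ arcSet a b) (hq : q ∉ arcSet a b) :
    OnRight (a, b) (p, q) := by
  rw [memAB hab] at hp hq
  rw [onRight_iff hab hap haq hbp hbq]
  exact ⟨by linarith [not_le.mp hp], by linarith [not_le.mp hq]⟩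

lemma geom_sbtw_of_mem (hab : a ≠ b) {x : Circle1} (hx : x ∈ arcSet a b) (hxa : x ≠ a)
    (hxb : x ≠ b) : sbtw a x b := by
  rw [memAB hab] at hx
  rw [sAXB hab]
  refine ⟨gp_pos (Ne.symm hxa), lt_of_le_of_ne hx (gp_ne hxb)⟩

/-- If both endpoints of `d` are in the arc of `c` (strictly), `d` is on the left of `c`. -/
lemma geom_onLeft_of_mem (hab : a ≠ b) (hap : a ≠ p) (haq : a ≠ q) (hbp : b ≠ p)
    (hbq : b ≠ q) (hp : p ∈ arcSet a b) (hq : q ∈ arcSet a b) :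
    OnLeft (a, b) (p, q) :=
  ⟨geom_sbtw_of_mem hab hp (Ne.symm hap) (Ne.symm hbp),
   geom_sbtw_of_mem hab hq (Ne.symm haq) (Ne.symm hbq)⟩

/-- If the two arcs cover the circle, the endpoints of `d` lie in the arc of `c`. -/
lemma geom_cover_mem (hab : a ≠ b) (hpq : p ≠ q)
    (hcov : arcSet a b ∪ arcSet p q = Set.univ) :
    p ∈ arcSet a b ∧ q ∈ arcSet a b := by
  have hB0 := gp_pos hab
  have hB1 := gp_lt_one a b
  have hP0 := gp_nonneg a p
  have hP1 := gp_lt_one a p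
  have hQ0 := gp_nonneg a q
  have hQ1 := gp_lt_one a q
  have key : ∀ t : ℝ, 0 ≤ t → t < 1 → gp a b < t →
      (if gp a p ≤ gp a q then gp a p ≤ t ∧ t ≤ gp a q
       else gp a p ≤ t ∨ t ≤ gp a q) := by
    intro t ht0 ht1 h1
    have hx : pm a t ∈ arcSet a b ∪ arcSet p q := hcov ▸ Set.mem_univ _
    rcases hx with hx | hx
    · rw [memAB hab, gp_pm a ht0 ht1] at hx
      exact absurd hx (not_le.mpr h1)
    · rw [memPQ (a := a) hpq, gp_pm a ht0 ht1] at hx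
      exact hx
  constructor
  · rw [memAB hab]
    by_contra hcon
    have hBP : gp a b < gp a p := lt_of_not_ge hcon
    rcases le_or_gt (gp a p) (gp a q) with hXY | hXY
    · have := key ((gp a b + gp a p) / 2) (by linarith) (by linarith) (by linarith)
      rw [if_pos hXY] at this
      linarith [this.1]
    · have hm : max (gp a b) (gp a q) < gp a p := max_lt hBP hXY
      have h1 := le_max_left (gp a b) (gp a q)
      have h2 := le_max_right (gp a b) (gp a q)
      have hm0 : 0 ≤ max (gp a b) (gp a q) := le_trans hQ0 h2
      have := key ((max (gp a b) (gp a q) + gp a p) / 2) (by linarith) (by linarith)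
        (by linarith)
      rw [if_neg (not_le.mpr hXY)] at this
      rcases this with u | u <;> linarith
  · rw [memAB hab]
    by_contra hcon
    have hBQ : gp a b < gp a q := lt_of_not_ge hcon
    rcases le_or_gt (gp a p) (gp a q) with hXY | hXY
    · have := key ((gp a q + 1) / 2) (by linarith) (by linarith) (by linarith)
      rw [if_pos hXY] at this
      linarith [this.2]
    · have := key ((gp a q + gp a p) / 2) (by linarith) (by linarith) (by linarith)
      rw [if_neg (not_le.mpr hXY)] at this
      rcases this with u | u <;> linarith

/-- If the arc of `c` is contained in the arc of `d`, then `d` is on the right of `c`. -/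
lemma geom_sub_onRight (hab : a ≠ b) (hpq : p ≠ q) (hap : a ≠ p) (haq : a ≠ q)
    (hbp : b ≠ p) (hbq : b ≠ q) (hsub : arcSet a b ⊆ arcSet p q) :
    OnRight (a, b) (p, q) := by
  have hB0 := gp_pos hab
  have hB1 := gp_lt_one a b
  have hP0 := gp_pos hap
  have hQ0 := gp_pos haq
  have hBP : gp a b ≠ gp a p := gp_ne hbp
  have hBQ : gp a b ≠ gp a q := gp_ne hbq
  have haa : (a : Circle1) ∈ arcSet a b := by
    rw [memAB hab, gp_self]; exact le_of_lt hB0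
  have had := hsub haa
  rw [memPQ (a := a) hpq (x := a), gp_self] at had
  have hwrap : gp a q < gp a p := by
    by_contra hc
    rw [if_pos (le_of_not_gt hc)] at had
    exact absurd had.1 (not_le.mpr hP0)
  rw [onRight_iff hab hap haq hbp hbq]
  have key : ∀ t : ℝ, gp a q < t → t < gp a p → t ≤ gp a b → False := by
    intro t h1 h2 h3
    have ht0 : 0 ≤ t := le_trans (le_of_lt hQ0) (le_of_lt h1)
    have ht1 : t < 1 := lt_of_le_of_lt h3 hB1
    have hmem : pm a t ∈ arcSet a b := by
      rw [memAB hab, gp_pm a ht0 ht1]; exact h3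
    have := hsub hmem
    rw [memPQ (a := a) hpq, if_neg (not_le.mpr hwrap), gp_pm a ht0 ht1] at this
    rcases this with u | u <;> linarith
  constructor
  · by_contra hc
    have hPB : gp a p < gp a b := lt_of_le_of_ne (le_of_not_gt hc) (Ne.symm hBP)
    exact key ((gp a q + gp a p) / 2) (by linarith) (by linarith) (by linarith)
  · by_contra hc
    have hQB : gp a q < gp a b := lt_of_le_of_ne (le_of_not_gt hc) (Ne.symm hBQ)
    have h2 : gp a q < min (gp a p) (gp a b) := lt_min hwrap hQB
    have h3 := min_le_left (gp a p) (gp a b)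
    have h4 := min_le_right (gp a p) (gp a b)
    exact key ((gp a q + min (gp a p) (gp a b)) / 2) (by linarith) (by linarith)
      (by linarith)

/-- Two arcs intersecting, neither containing the other, not covering: the chords cross. -/
lemma geom_crosses_of (hab : a ≠ b) (hpq : p ≠ q) (hap : a ≠ p) (haq : a ≠ q)
    (hbp : b ≠ p) (hbq : b ≠ q)
    (hint : (arcSet a b ∩ arcSet p q).Nonempty)
    (hns : ¬ arcSet p q ⊆ arcSet a b)
    (hns' : ¬ arcSet a b ⊆ arcSet p q)
    (hnc : arcSet a b ∪ arcSet p q ≠ Set.univ) :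
    Crosses (a, b) (p, q) := by
  have hB0 := gp_pos hab
  have hB1 := gp_lt_one a b
  have hP0 := gp_pos hap
  have hP1 := gp_lt_one a p
  have hQ0 := gp_pos haq
  have hQ1 := gp_lt_one a q
  have hBP : gp a b ≠ gp a p := gp_ne hbp
  have hBQ : gp a b ≠ gp a q := gp_ne hbq
  rw [crosses_iff hab hap haq hbp hbq]
  rcases le_or_gt (gp a p) (gp a q) with hord | hord
  · obtain ⟨x, hx1, hx2⟩ := hint
    rw [memAB hab] at hx1
    rw [memPQ (a := a) hpq, if_pos hord] at hx2
    have hPBs : gp a p < gp a b := lt_of_le_of_ne (le_trans hx2.1 hx1) (Ne.symm hBP)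
    left
    refine ⟨hPBs, ?_⟩
    by_contra hc
    have hQB : gp a q < gp a b := lt_of_le_of_ne (le_of_not_gt hc) (Ne.symm hBQ)
    apply hns
    intro y hy
    rw [memPQ (a := a) hpq, if_pos hord] at hy
    rw [memAB hab]
    linarith [hy.1, hy.2]
  · right
    obtain ⟨x, hx⟩ := (Set.ne_univ_iff_exists_notMem _).mp hnc
    rw [Set.mem_union, not_or] at hx
    obtain ⟨hx1, hx2⟩ := hx
    rw [memAB hab] at hx1
    rw [memPQ (a := a) hpq, if_neg (not_le.mpr hord)] at hx2
    push_neg at hx2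
    have hXB : gp a b < gp a x := lt_of_not_ge hx1
    have hXP : gp a x < gp a p := hx2.1
    have hBP' : gp a b < gp a p := lt_trans hXB hXP
    have hQB : gp a q < gp a b := by
      by_contra hc
      have hBQ' : gp a b < gp a q := lt_of_le_of_ne (le_of_not_gt hc) hBQ
      apply hns'
      intro y hy
      rw [memAB hab] at hy
      rw [memPQ (a := a) hpq, if_neg (not_le.mpr hord)]
      right; linarith
    exact ⟨hQB, hBP'⟩

lemma geom_onLeft_not_onRight (hab : a ≠ b) (hap : a ≠ p) (haq : a ≠ q) (hbp : b ≠ p)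
    (hbq : b ≠ q) (h1 : OnLeft (a, b) (p, q)) (h2 : OnRight (a, b) (p, q)) : False := by
  rw [onLeft_iff hab] at h1
  rw [onRight_iff hab hap haq hbp hbq] at h2
  linarith [h1.1.2, h2.1]

lemma geom_onLeft_not_crosses (hab : a ≠ b) (hap : a ≠ p) (haq : a ≠ q) (hbp : b ≠ p)
    (hbq : b ≠ q) (h1 : OnLeft (a, b) (p, q)) (h2 : Crosses (a, b) (p, q)) : False := by
  rw [onLeft_iff hab] at h1
  rw [crosses_iff hab hap haq hbp hbq] at h2
  rcases h2 with ⟨u1, u2⟩ | ⟨u1, u2⟩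
  · linarith [h1.2.2]
  · linarith [h1.1.2]

lemma geom_onRight_not_crosses (hab : a ≠ b) (hap : a ≠ p) (haq : a ≠ q) (hbp : b ≠ p)
    (hbq : b ≠ q) (h1 : OnRight (a, b) (p, q)) (h2 : Crosses (a, b) (p, q)) : False := by
  rw [onRight_iff hab hap haq hbp hbq] at h1
  rw [crosses_iff hab hap haq hbp hbq] at h2
  rcases h2 with ⟨u1, u2⟩ | ⟨u1, u2⟩
  · linarith [h1.1]
  · linarith [h1.2]

lemma geom_onRight2_disj (hab : a ≠ b) (hpq : p ≠ q) (hap : a ≠ p) (haq : a ≠ q)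
    (hbp : b ≠ p) (hbq : b ≠ q) (h1 : OnRight (a, b) (p, q)) (h2 : OnRight (p, q) (a, b)) :
    arcSet a b ∩ arcSet p q = ∅ := by
  rw [onRight_iff hab hap haq hbp hbq] at h1
  have h2' : sbtw q a p := h2.1
  rw [sQAP hap haq hpq] at h2'
  ext x
  simp only [Set.mem_inter_iff, Set.mem_empty_iff_false, iff_false, not_and]
  intro hx1 hx2
  rw [memAB hab] at hx1
  rw [memPQ (a := a) hpq, if_pos (le_of_lt h2')] at hx2
  linarith [hx2.1, h1.1]

lemma mem_arcSet_left (a b : Circle1) : a ∈ arcSet a b := by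
  simp only [arcSet, Set.mem_setOf_eq]; exact btw_rfl_left

lemma mem_arcSet_right (a b : Circle1) : b ∈ arcSet a b := by
  simp only [arcSet, Set.mem_setOf_eq]; exact btw_rfl_right

lemma geom_nonempty_of_onLeft (hab : a ≠ b) (h : OnLeft (a, b) (p, q)) :
    (arcSet a b ∩ arcSet p q).Nonempty :=
  ⟨p, btw_of_sbtw h.1, mem_arcSet_left p q⟩

lemma geom_nonempty_of_crosses (hab : a ≠ b) (h : Crosses (a, b) (p, q)) :
    (arcSet a b ∩ arcSet p q).Nonempty := by
  rcases h with ⟨h1, _⟩ | ⟨h1, _⟩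
  · exact ⟨p, btw_of_sbtw h1, mem_arcSet_left p q⟩
  · exact ⟨q, btw_of_sbtw h1, mem_arcSet_right p q⟩

end ChordGeometry

section Combinatorics

variable {V : Type*} {G : SimpleGraph V}

lemma mem_cnbr {u v : V} : u ∈ cnbr G v ↔ u = v ∨ G.Adj v u := by
  simp [cnbr, eq_comm]

lemma self_mem_cnbr (v : V) : v ∈ cnbr G v := mem_cnbr.mpr (Or.inl rfl)

lemma mem_cnbr_of_adj {u v : V} (h : G.Adj v u) : u ∈ cnbr G v := mem_cnbr.mpr (Or.inr h)

lemma adj_of_cnbr_subset {u v : V} (h : cnbr G u ⊆ cnbr G v) (hne : u ≠ v) : G.Adj v u := by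
  have := h (self_mem_cnbr u)
  rcases mem_cnbr.mp this with h' | h'
  · exact absurd h' hne
  · exact h'

lemma rel_exhaustive {u v : V} (h : v ≠ u) :
    Di G v u ∨ Cs G v u ∨ Cd G v u ∨ Cc G v u ∨ Ov G v u := by
  by_cases h1 : Di G v u
  · exact Or.inl h1
  by_cases h2 : Cs G v u
  · exact Or.inr (Or.inl h2)
  by_cases h3 : Cd G v u
  · exact Or.inr (Or.inr (Or.inl h3))
  by_cases h4 : Cc G v u
  · exact Or.inr (Or.inr (Or.inr (Or.inl h4)))
  · exact Or.inr (Or.inr (Or.inr (Or.inr ⟨h, h1, h2, h3, h4⟩)))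

end Combinatorics

section Soundness

variable {V : Type*} {G : SimpleGraph V} {ψ : V → Circle1 × Circle1}

lemma lep_false (ψ : V → Circle1 × Circle1) (v : V) : lep ψ (v, false) = (ψ v).1 := rfl

lemma lep_true (ψ : V → Circle1 × Circle1) (v : V) : lep ψ (v, true) = (ψ v).2 := rfl

lemma ep_ne (h : DistinctEndpointsOn Set.univ ψ) {v u : V} {bv bu : Bool}
    (hne : (v, bv) ≠ (u, bu)) : lep ψ (v, bv) ≠ lep ψ (u, bu) :=
  fun he => hne (h (Set.mem_univ _ : ((v, bv) : V × Bool).1 ∈ Set.univ)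
    (Set.mem_univ _ : ((u, bu) : V × Bool).1 ∈ Set.univ) he)

/-- The six endpoint-distinctness facts for a pair of distinct vertices. -/
lemma ep_six (h : DistinctEndpointsOn Set.univ ψ) {v u : V} (hne : v ≠ u) :
    (ψ v).1 ≠ (ψ v).2 ∧ (ψ u).1 ≠ (ψ u).2 ∧ (ψ v).1 ≠ (ψ u).1 ∧ (ψ v).1 ≠ (ψ u).2 ∧
    (ψ v).2 ≠ (ψ u).1 ∧ (ψ v).2 ≠ (ψ u).2 := by
  refine ⟨?_, ?_, ?_, ?_, ?_, ?_⟩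
  · show lep ψ (v, false) ≠ lep ψ (v, true); exact ep_ne h (by simp)
  · show lep ψ (u, false) ≠ lep ψ (u, true); exact ep_ne h (by simp)
  · show lep ψ (v, false) ≠ lep ψ (u, false); exact ep_ne h (by simp [hne])
  · show lep ψ (v, false) ≠ lep ψ (u, true); exact ep_ne h (by simp [hne])
  · show lep ψ (v, true) ≠ lep ψ (u, false); exact ep_ne h (by simp [hne])
  · show lep ψ (v, true) ≠ lep ψ (u, true); exact ep_ne h (by simp [hne])

lemma arcPts_eq (c : Circle1 × Circle1) : arcPts c = arcSet c.1 c.2 := rfl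

lemma model_disjoint_iff (hm : IsCAModel G ψ) {u v : V} (h : u ≠ v) :
    ¬ G.Adj u v ↔ arcPts (ψ u) ∩ arcPts (ψ v) = ∅ := by
  rw [hm.2 u v h, ← Set.not_nonempty_iff_eq_empty]

lemma model_nonempty_self (v : V) : (arcPts (ψ v)).Nonempty :=
  ⟨(ψ v).1, mem_arcSet_left _ _⟩

/-- Soundness: arc containment implies closed-neighborhood containment. -/
lemma sound_sub (hm : IsCAModel G ψ) {u v : V} (hne : u ≠ v)
    (hsub : arcPts (ψ u) ⊆ arcPts (ψ v)) : cnbr G u ⊆ cnbr G v := by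
  intro w hw
  have hadjvu : G.Adj v u := by
    have hne' : v ≠ u := Ne.symm hne
    have : (arcPts (ψ v) ∩ arcPts (ψ u)).Nonempty := by
      obtain ⟨x, hx⟩ := model_nonempty_self (ψ := ψ) u
      exact ⟨x, hsub hx, hx⟩
    exact (hm.2 v u hne').mpr this
  rcases mem_cnbr.mp hw with rfl | hadj
  · exact mem_cnbr_of_adj hadjvu
  · by_cases hwv : w = v
    · subst hwv; exact self_mem_cnbr w
    · have : (arcPts (ψ w) ∩ arcPts (ψ u)).Nonempty := (hm.2 w u (by
        intro h; subst h; exact G.loopless.irrefl w hadj)).mp (G.adj_symm hadj)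
      obtain ⟨x, hx1, hx2⟩ := this
      have : (arcPts (ψ w) ∩ arcPts (ψ v)).Nonempty := ⟨x, hx1, hsub hx2⟩
      exact mem_cnbr_of_adj (G.adj_symm ((hm.2 w v hwv).mpr this))

/-- Soundness: strict containment conclusion (using no-twins). -/
lemma sound_cs (htw : NoTwins G) (hm : IsCAModel G ψ) {u v : V} (hne : v ≠ u)
    (hsub : arcPts (ψ u) ⊆ arcPts (ψ v)) : Cs G v u :=
  ⟨hne, ssubset_of_subset_of_ne (sound_sub hm (Ne.symm hne) hsub) (htw u v (Ne.symm hne))⟩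

/-- Soundness: covering arcs imply the `cc` relation (using no-twins). -/
lemma sound_cc (htw : NoTwins G) (hm : IsCAModel G ψ) {u v : V} (hne : v ≠ u)
    (hcov : arcPts (ψ v) ∪ arcPts (ψ u) = Set.univ) : Cc G v u := by
  have hd := hm.1
  obtain ⟨hab, hpq, hap, haq, hbp, hbq⟩ := ep_six hd hne
  have hmem := geom_cover_mem hab hpq hcov
  have hadj : G.Adj v u := (hm.2 v u hne).mpr ⟨(ψ u).1, hmem.1, mem_arcSet_left _ _⟩
  have huniv : cnbr G v ∪ cnbr G u = Set.univ := by
    apply Set.eq_univ_of_forall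
    intro w
    by_cases hwv : w = v
    · exact Or.inl (hwv ▸ self_mem_cnbr w)
    by_cases hwu : w = u
    · exact Or.inr (hwu ▸ self_mem_cnbr w)
    obtain ⟨x, hx⟩ := model_nonempty_self (ψ := ψ) w
    have : x ∈ arcPts (ψ v) ∪ arcPts (ψ u) := hcov ▸ Set.mem_univ x
    rcases this with hxx | hxx
    · exact Or.inl (mem_cnbr_of_adj (G.adj_symm ((hm.2 w v hwv).mpr ⟨x, hx, hxx⟩)))
    · exact Or.inr (mem_cnbr_of_adj (G.adj_symm ((hm.2 w u hwu).mpr ⟨x, hx, hxx⟩)))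
  have hpriv : ∀ {x y : V}, arcPts (ψ x) ∪ arcPts (ψ y) = Set.univ →
      ∀ w ∈ cnbr G x \ cnbr G y, cnbr G w ⊂ cnbr G x := by
    intro x y hcov' w hw
    obtain ⟨hw1, hw2⟩ := hw
    have hwy : w ≠ y := fun h => hw2 (h ▸ self_mem_cnbr w)
    have hnadj : ¬ G.Adj w y := fun h => hw2 (mem_cnbr_of_adj (G.adj_symm h))
    have hdisj : arcPts (ψ w) ∩ arcPts (ψ y) = ∅ := (model_disjoint_iff hm hwy).mp hnadj
    have hsub : arcPts (ψ w) ⊆ arcPts (ψ x) := by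
      intro z hz
      have : z ∈ arcPts (ψ x) ∪ arcPts (ψ y) := hcov' ▸ Set.mem_univ z
      rcases this with h' | h'
      · exact h'
      · exact absurd (Set.mem_inter hz h') (by rw [hdisj]; exact Set.notMem_empty z)
    have hwx : w ≠ x := by
      rintro rfl
      rcases Set.eq_empty_or_nonempty (arcPts (ψ w) ∩ arcPts (ψ y)) with h' | h'
      ·
        obtain ⟨haa, hbb, hcc, hdd, hee, hff⟩ :=
          ep_six hd (hwy : w ≠ y)
        have := geom_cover_mem haa hbb hcov'
        exact (Set.eq_empty_iff_forall_notMem.mp h' (ψ y).1)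
          (Set.mem_inter this.1 (mem_arcSet_left _ _))
      · obtain ⟨z, hz⟩ := h'
        exact (Set.eq_empty_iff_forall_notMem.mp hdisj z) hz
    exact ssubset_of_subset_of_ne (sound_sub hm hwx hsub) (htw w x hwx)
  refine ⟨hne, hadj, huniv, ?_, ?_⟩
  · intro w hw
    exact hpriv hcov w hw
  · intro w hw
    have hcov' : arcPts (ψ u) ∪ arcPts (ψ v) = Set.univ := by
      rw [Set.union_comm]; exact hcov
    exact hpriv hcov' w hw

end Soundness

section Assembly

variable {V : Type*} {G : SimpleGraph V} {ψ φ : V → Circle1 × Circle1}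

/-- A normalized circular-arc model (the combinatorial core of normalization). -/
def IsGoodModel (G : SimpleGraph V) (ψ : V → Circle1 × Circle1) : Prop :=
  IsCAModel G ψ ∧
  (∀ u v : V, u ≠ v → cnbr G u ⊆ cnbr G v → arcPts (ψ u) ⊆ arcPts (ψ v)) ∧
  (∀ u v : V, Cc G v u → arcPts (ψ v) ∪ arcPts (ψ u) = Set.univ)

lemma good_pair (htw : NoTwins G) (hg : IsGoodModel G ψ) {v u : V} (hne : v ≠ u) :
    (Di G v u → OnRight (ψ v) (ψ u)) ∧ (Cs G v u → OnLeft (ψ v) (ψ u)) ∧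
    (Cd G v u → OnRight (ψ v) (ψ u)) ∧ (Cc G v u → OnLeft (ψ v) (ψ u)) ∧
    (Ov G v u → Crosses (ψ v) (ψ u)) := by
  obtain ⟨hm, hfix, hcov⟩ := hg
  obtain ⟨hab, hpq, hap, haq, hbp, hbq⟩ := ep_six hm.1 hne
  refine ⟨?_, ?_, ?_, ?_, ?_⟩
  · rintro ⟨-, hnadj⟩
    have hdisj : arcPts (ψ v) ∩ arcPts (ψ u) = ∅ := (model_disjoint_iff hm hne).mp hnadj
    apply geom_onRight_of_notMem hab hap haq hbp hbq
    · intro hmem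
      exact Set.eq_empty_iff_forall_notMem.mp hdisj (ψ u).1
        (Set.mem_inter hmem (mem_arcSet_left _ _))
    · intro hmem
      exact Set.eq_empty_iff_forall_notMem.mp hdisj (ψ u).2
        (Set.mem_inter hmem (mem_arcSet_right _ _))
  · rintro ⟨-, hsub⟩
    have := hfix u v (Ne.symm hne) hsub.1
    exact geom_onLeft_of_mem hab hap haq hbp hbq (this (mem_arcSet_left _ _))
      (this (mem_arcSet_right _ _))
  · rintro ⟨-, hsub⟩
    exact geom_sub_onRight hab hpq hap haq hbp hbq (hfix v u hne hsub.1)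
  · intro hcc
    have := hcov u v hcc
    have hmem := geom_cover_mem hab hpq this
    exact geom_onLeft_of_mem hab hap haq hbp hbq hmem.1 hmem.2
  · rintro ⟨-, hndi, hncs, hncd, hncc⟩
    have hadj : G.Adj v u := by
      by_contra hnadj
      exact hndi ⟨hne, hnadj⟩
    apply geom_crosses_of hab hpq hap haq hbp hbq
    · exact (hm.2 v u hne).mp hadj
    · intro hsub
      exact hncs (sound_cs htw hm hne hsub)
    · intro hsub
      obtain ⟨h1, h2⟩ := sound_cs htw hm (Ne.symm hne) hsub
      exact hncd ⟨hne, h2⟩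
    · intro hcv
      exact hncc (sound_cc htw hm hne hcv)

lemma conformal_of_good (htw : NoTwins G) (hg : IsGoodModel G ψ) :
    IsConformalOn G Set.univ ψ := by
  have hm := hg.1
  have hd := hm.1
  constructor
  · refine ⟨hd, ?_⟩
    intro u _ v _ hne
    obtain ⟨hab, hpq, hap, haq, hbp, hbq⟩ := ep_six hd hne
    obtain ⟨pDi, pCs, pCd, pCc, pOv⟩ := good_pair htw hg hne
    constructor
    · exact pOv
    · intro hcr
      rcases rel_exhaustive (G := G) hne with h | h | h | h | h
      · exact absurd hcr (fun hc => geom_onRight_not_crosses hab hap haq hbp hbq (pDi h) hc)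
      · exact absurd hcr (fun hc => geom_onLeft_not_crosses hab hap haq hbp hbq (pCs h) hc)
      · exact absurd hcr (fun hc => geom_onRight_not_crosses hab hap haq hbp hbq (pCd h) hc)
      · exact absurd hcr (fun hc => geom_onLeft_not_crosses hab hap haq hbp hbq (pCc h) hc)
      · exact h
  · intro v _ u _ hne
    obtain ⟨hab, hpq, hap, haq, hbp, hbq⟩ := ep_six hd (Ne.symm hne : v ≠ u)
    obtain ⟨pDi, pCs, pCd, pCc, pOv⟩ := good_pair htw hg (Ne.symm hne : v ≠ u)
    constructor
    · constructor
      · rintro (h | h)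
        · exact pCs h
        · exact pCc h
      · intro hol
        rcases rel_exhaustive (G := G) (Ne.symm hne : v ≠ u) with h | h | h | h | h
        · exact absurd hol (fun hc =>
            geom_onLeft_not_onRight hab hap haq hbp hbq hc (pDi h))
        · exact Or.inl h
        · exact absurd hol (fun hc =>
            geom_onLeft_not_onRight hab hap haq hbp hbq hc (pCd h))
        · exact Or.inr h
        · exact absurd hol (fun hc =>
            geom_onLeft_not_crosses hab hap haq hbp hbq hc (pOv h))
    · constructor
      · rintro (h | h)
        · exact pDi h
        · exact pCd h
      · intro hor
        rcases rel_exhaustive (G := G) (Ne.symm hne : v ≠ u) with h | h | h | h | h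
        · exact Or.inl h
        · exact absurd hor (fun hc =>
            geom_onLeft_not_onRight hab hap haq hbp hbq (pCs h) hc)
        · exact Or.inr h
        · exact absurd hor (fun hc =>
            geom_onLeft_not_onRight hab hap haq hbp hbq (pCc h) hc)
        · exact absurd hor (fun hc =>
            geom_onRight_not_crosses hab hap haq hbp hbq hc (pOv h))

lemma ca_of_conformal (hc : IsConformalOn G Set.univ φ) : IsCAModel G φ := by
  obtain ⟨⟨hd, hcross⟩, hside⟩ := hc
  refine ⟨hd, ?_⟩
  intro u v hne
  obtain ⟨hab, hpq, hap, haq, hbp, hbq⟩ := ep_six hd hne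
  constructor
  · intro hadj
    rcases rel_exhaustive (G := G) hne with h | h | h | h | h
    · exact absurd hadj h.2
    · -- Cs u v : v ∈ leftSet u
      have : OnLeft (φ u) (φ v) :=
        ((hside u (Set.mem_univ u) v (Set.mem_univ v) (Ne.symm hne)).1).mp (Or.inl h)
      exact geom_nonempty_of_onLeft hab this
    · -- Cd u v = cnbr u ⊂ cnbr v : u ∈ leftSet v
      have : OnLeft (φ v) (φ u) :=
        ((hside v (Set.mem_univ v) u (Set.mem_univ u) hne).1).mp (Or.inl ⟨Ne.symm hne, h.2⟩)
      have := geom_nonempty_of_onLeft hpq this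
      rwa [Set.inter_comm] at this
    · have : OnLeft (φ u) (φ v) :=
        ((hside u (Set.mem_univ u) v (Set.mem_univ v) (Ne.symm hne)).1).mp (Or.inr h)
      exact geom_nonempty_of_onLeft hab this
    · have : Crosses (φ u) (φ v) := (hcross u (Set.mem_univ u) v (Set.mem_univ v) hne).mp h
      exact geom_nonempty_of_crosses hab this
  · intro hnonempty
    by_contra hnadj
    have hdi : Di G u v := ⟨hne, hnadj⟩
    have h1 : OnRight (φ u) (φ v) :=
      ((hside u (Set.mem_univ u) v (Set.mem_univ v) (Ne.symm hne)).2).mp (Or.inl hdi)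
    have hdi' : Di G v u := ⟨Ne.symm hne, fun h => hnadj (G.adj_symm h)⟩
    have h2 : OnRight (φ v) (φ u) :=
      ((hside v (Set.mem_univ v) u (Set.mem_univ u) hne).2).mp (Or.inl hdi')
    have := geom_onRight2_disj hab hpq hap haq hbp hbq h1 h2
    obtain ⟨x, hx⟩ := hnonempty
    exact Set.eq_empty_iff_forall_notMem.mp this x hx

end Assembly

section Normalize

variable {V : Type*} [Fintype V] {G : SimpleGraph V} {ψ : V → Circle1 × Circle1}

lemma ep_own (hd : DistinctEndpointsOn Set.univ ψ) (v : V) : (ψ v).1 ≠ (ψ v).2 := by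
  show lep ψ (v, false) ≠ lep ψ (v, true)
  exact ep_ne hd (by simp)

lemma exists_mgap [Nonempty V] (hd : DistinctEndpointsOn Set.univ ψ) :
    ∃ m : ℝ, 0 < m ∧ m < 1 ∧
      ∀ p q : V × Bool, lep ψ p ≠ lep ψ q → m ≤ gp (lep ψ p) (lep ψ q) := by
  classical
  set F : Finset ℝ :=
    ((Finset.univ : Finset ((V × Bool) × (V × Bool))).filter
      (fun z => lep ψ z.1 ≠ lep ψ z.2)).image (fun z => gp (lep ψ z.1) (lep ψ z.2)) with hF
  have hne : F.Nonempty := by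
    obtain ⟨v⟩ := (inferInstance : Nonempty V)
    refine ⟨gp (lep ψ (v, false)) (lep ψ (v, true)), ?_⟩
    rw [hF, Finset.mem_image]
    refine ⟨((v, false), (v, true)), ?_, rfl⟩
    rw [Finset.mem_filter]
    exact ⟨Finset.mem_univ _, ep_ne hd (by simp)⟩
  refine ⟨F.min' hne, ?_, ?_, ?_⟩
  · obtain ⟨z, hz, hzeq⟩ := Finset.mem_image.mp (F.min'_mem hne)
    rw [← hzeq]
    exact gp_pos (Finset.mem_filter.mp hz).2
  · obtain ⟨z, hz, hzeq⟩ := Finset.mem_image.mp (F.min'_mem hne)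
    rw [← hzeq]
    exact gp_lt_one _ _
  · intro p q hpq
    apply Finset.min'_le
    rw [hF, Finset.mem_image]
    exact ⟨(p, q), Finset.mem_filter.mpr ⟨Finset.mem_univ _, hpq⟩, rfl⟩

lemma union_arc (hun : NoUniversal G) (hm : IsCAModel G ψ) (v : V) :
    ∃ A B : Circle1, (∃ p : V × Bool, lep ψ p = A) ∧ (∃ p : V × Bool, lep ψ p = B) ∧
      A ≠ B ∧
      (∀ x, x ∈ arcSet A B ↔ ∃ u, cnbr G u ⊆ cnbr G v ∧ x ∈ arcPts (ψ u)) := by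
  classical
  obtain ⟨hd, hadj⟩ := hm
  -- the union is not the whole circle
  have hne : {x : Circle1 | ∃ u, cnbr G u ⊆ cnbr G v ∧ x ∈ arcPts (ψ u)} ≠ Set.univ := by
    intro h
    apply hun v
    apply Set.eq_univ_of_forall
    intro w
    have : (ψ w).1 ∈ {x : Circle1 | ∃ u, cnbr G u ⊆ cnbr G v ∧ x ∈ arcPts (ψ u)} := by
      rw [h]; exact Set.mem_univ _
    obtain ⟨u, hu1, hu2⟩ := this
    have hmem : w ∈ cnbr G u := by
      by_cases hwu : w = u
      · exact hwu ▸ self_mem_cnbr w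
      · have : (arcPts (ψ w) ∩ arcPts (ψ u)).Nonempty :=
          ⟨(ψ w).1, mem_arcSet_left _ _, hu2⟩
        exact mem_cnbr_of_adj (G.adj_symm ((hadj w u hwu).mpr this))
    exact hu1 hmem
  obtain ⟨z, hz⟩ := (Set.ne_univ_iff_exists_notMem _).mp hne
  simp only [Set.mem_setOf_eq, not_exists, not_and] at hz
  -- each member arc in the frame of z : no wrap, positive start
  have harc : ∀ u : V, cnbr G u ⊆ cnbr G v →
      gp z (ψ u).1 ≤ gp z (ψ u).2 ∧ 0 < gp z (ψ u).1 ∧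
      (∀ x, x ∈ arcPts (ψ u) ↔ gp z (ψ u).1 ≤ gp z x ∧ gp z x ≤ gp z (ψ u).2) := by
    intro u hu
    have hzz := hz u hu
    have hne12 := ep_own hd u
    have hmem := mem_arcSet_frame z hne12
    rcases le_or_gt (gp z (ψ u).1) (gp z (ψ u).2) with hle | hlt
    · refine ⟨hle, ?_, ?_⟩
      · by_contra hc
        apply hzz
        rw [arcPts_eq, hmem z, if_pos hle, gp_self]
        exact ⟨le_of_not_gt hc, gp_nonneg _ _⟩
      · intro x
        rw [arcPts_eq, hmem x, if_pos hle]
    · exfalso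
      apply hzz
      rw [arcPts_eq, hmem z, if_neg (not_le.mpr hlt), gp_self]
      exact Or.inr (gp_nonneg _ _)
  -- pairwise intersection of member arcs with the arc of v (in coordinates)
  have hint : ∀ u : V, cnbr G u ⊆ cnbr G v →
      gp z (ψ u).1 ≤ gp z (ψ v).2 ∧ gp z (ψ v).1 ≤ gp z (ψ u).2 := by
    intro u hu
    by_cases huv : u = v
    · subst huv
      obtain ⟨h1, _, _⟩ := harc u hu
      exact ⟨h1, h1⟩
    · have hadjvu : G.Adj v u := adj_of_cnbr_subset hu huv
      have : (arcPts (ψ v) ∩ arcPts (ψ u)).Nonempty := (hadj v u (Ne.symm huv)).mp hadjvu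
      obtain ⟨x, hx1, hx2⟩ := this
      obtain ⟨_, _, hchar⟩ := harc u hu
      obtain ⟨_, _, hcharv⟩ := harc v (subset_refl _)
      rw [hchar x] at hx2
      rw [hcharv x] at hx1
      exact ⟨le_trans hx2.1 hx1.2, le_trans hx1.1 hx2.2⟩
  -- choose extremes
  set FvF : Finset V := Finset.univ.filter (fun u => cnbr G u ⊆ cnbr G v) with hFvF
  have hFvne : FvF.Nonempty := ⟨v, by rw [hFvF, Finset.mem_filter]; exact ⟨Finset.mem_univ _, subset_refl _⟩⟩
  obtain ⟨uA, huAmem, huAmin⟩ := FvF.exists_min_image (fun u => gp z (ψ u).1) hFvne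
  obtain ⟨uB, huBmem, huBmax⟩ := FvF.exists_max_image (fun u => gp z (ψ u).2) hFvne
  have hmemF : ∀ u, u ∈ FvF ↔ cnbr G u ⊆ cnbr G v := by
    intro u; rw [hFvF, Finset.mem_filter]; simp
  have huA : cnbr G uA ⊆ cnbr G v := (hmemF uA).mp huAmem
  have huB : cnbr G uB ⊆ cnbr G v := (hmemF uB).mp huBmem
  have hvmem : cnbr G v ⊆ cnbr G v := subset_refl _
  refine ⟨(ψ uA).1, (ψ uB).2, ⟨(uA, false), rfl⟩, ⟨(uB, true), rfl⟩, ?_, ?_⟩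
  · -- A ≠ B
    intro hAB
    have h1 : gp z (ψ uA).1 ≤ gp z (ψ v).1 := huAmin v ((hmemF v).mpr hvmem)
    have h2 : gp z (ψ v).2 ≤ gp z (ψ uB).2 := huBmax v ((hmemF v).mpr hvmem)
    have h3 : gp z (ψ v).1 ≤ gp z (ψ v).2 := (harc v hvmem).1
    have h4 : gp z (ψ v).1 ≠ gp z (ψ v).2 := gp_ne (ep_own hd v)
    have : gp z (ψ uA).1 = gp z (ψ uB).2 := by rw [hAB]
    linarith [lt_of_le_of_ne h3 h4]
  · intro x
    constructor
    · intro hx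
      -- x in arcSet A B : coordinates between
      have hAB : (ψ uA).1 ≠ (ψ uB).2 := by
        intro hAB
        have h1 : gp z (ψ uA).1 ≤ gp z (ψ v).1 := huAmin v ((hmemF v).mpr hvmem)
        have h2 : gp z (ψ v).2 ≤ gp z (ψ uB).2 := huBmax v ((hmemF v).mpr hvmem)
        have h3 : gp z (ψ v).1 ≤ gp z (ψ v).2 := (harc v hvmem).1
        have h4 : gp z (ψ v).1 ≠ gp z (ψ v).2 := gp_ne (ep_own hd v)
        have : gp z (ψ uA).1 = gp z (ψ uB).2 := by rw [hAB]
        linarith [lt_of_le_of_ne h3 h4]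
      have hABle : gp z (ψ uA).1 ≤ gp z (ψ uB).2 := by
        have h1 : gp z (ψ uA).1 ≤ gp z (ψ uB).1 := huAmin uB huBmem
        exact le_trans h1 (harc uB huB).1
      rw [mem_arcSet_frame z hAB x, if_pos hABle] at hx
      obtain ⟨hx1, hx2⟩ := hx
      rcases le_or_gt (gp z x) (gp z (ψ uA).2) with hc | hc
      · exact ⟨uA, huA, ((harc uA huA).2.2 x).mpr ⟨hx1, hc⟩⟩
      · rcases le_or_gt (gp z (ψ uB).1) (gp z x) with hc2 | hc2
        · exact ⟨uB, huB, ((harc uB huB).2.2 x).mpr ⟨hc2, hx2⟩⟩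
        · refine ⟨v, hvmem, ((harc v hvmem).2.2 x).mpr ⟨?_, ?_⟩⟩
          · exact le_trans (hint uA huA).2 (le_of_lt hc)
          · exact le_trans (le_of_lt hc2) (hint uB huB).1
    · rintro ⟨u, hu, hx⟩
      have hABne : (ψ uA).1 ≠ (ψ uB).2 := by
        intro hAB
        have h1 : gp z (ψ uA).1 ≤ gp z (ψ v).1 := huAmin v ((hmemF v).mpr hvmem)
        have h2 : gp z (ψ v).2 ≤ gp z (ψ uB).2 := huBmax v ((hmemF v).mpr hvmem)
        have h3 : gp z (ψ v).1 ≤ gp z (ψ v).2 := (harc v hvmem).1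
        have h4 : gp z (ψ v).1 ≠ gp z (ψ v).2 := gp_ne (ep_own hd v)
        have : gp z (ψ uA).1 = gp z (ψ uB).2 := by rw [hAB]
        linarith [lt_of_le_of_ne h3 h4]
      have hABle : gp z (ψ uA).1 ≤ gp z (ψ uB).2 := by
        have h1 : gp z (ψ uA).1 ≤ gp z (ψ uB).1 := huAmin uB huBmem
        exact le_trans h1 (harc uB huB).1
      rw [mem_arcSet_frame z hABne x, if_pos hABle]
      rw [(harc u hu).2.2 x] at hx
      have h1 : gp z (ψ uA).1 ≤ gp z (ψ u).1 := huAmin u ((hmemF u).mpr hu)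
      have h2 : gp z (ψ u).2 ≤ gp z (ψ uB).2 := huBmax u ((hmemF u).mpr hu)
      exact ⟨le_trans h1 hx.1, le_trans hx.2 h2⟩


section CloseLemmas

variable {e e' x : Circle1} {d d' m : ℝ}

lemma close_BB (hd : d < m) (hd' : d' < m)
    (hgap : e ≠ e' → m ≤ gp e e' ∧ m ≤ gp e' e)
    (h1 : gp e x ≤ d) (h2 : gp e' x ≤ d') : e = e' := by
  by_contra hne
  obtain ⟨hg1, hg2⟩ := hgap hne
  rcases gp_cocycle e e' x with hc | hc
  · have := gp_nonneg e' x; linarith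
  · have hanti := gp_anti hne
    have := gp_nonneg e x; linarith

lemma close_BA (hsum : d + d' < m)
    (hgap : e ≠ e' → m ≤ gp e e' ∧ m ≤ gp e' e)
    (h1 : gp e x ≤ d) (h2 : gp x e' ≤ d') : e = e' := by
  by_contra hne
  obtain ⟨hg1, _⟩ := hgap hne
  rcases gp_cocycle e x e' with hc | hc
  · linarith
  · have := gp_nonneg e e'; linarith

lemma close_AA (hd : d < m) (hd' : d' < m)
    (hgap : e ≠ e' → m ≤ gp e e' ∧ m ≤ gp e' e)
    (h1 : gp x e ≤ d) (h2 : gp x e' ≤ d') : e = e' := by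
  by_contra hne
  obtain ⟨hg1, hg2⟩ := hgap hne
  rcases gp_cocycle x e e' with hc | hc
  · have := gp_nonneg x e; linarith
  · have hanti := gp_anti hne
    have := gp_nonneg x e'; linarith

/-- If `x` lies in an arc and within `d < m` after `B`, then `B` lies in the arc. -/
lemma absorb_B {s' e' B : Circle1} (hse : s' ≠ e') (hd : d < m)
    (hgapBs : B ≠ s' → m ≤ gp B s')
    (h1 : gp B x ≤ d) (hx : x ∈ arcSet s' e') : B ∈ arcSet s' e' := by
  by_cases hBs : B = s'
  · subst hBs; exact mem_arcSet_left _ _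
  by_cases hBe : B = e'
  · subst hBe; exact mem_arcSet_right _ _
  rw [mem_arcSet_iff hse] at hx ⊢
  rcases gp_cocycle s' B x with hc | hc
  · have := gp_nonneg B x; linarith
  · exfalso
    have hanti := gp_anti (Ne.symm hBs : s' ≠ B)
    have := gp_nonneg s' x
    linarith [hgapBs hBs]

/-- If `x` lies in an arc and within `d < m` before `A`, then `A` lies in the arc. -/
lemma absorb_A {s' e' A : Circle1} (hse : s' ≠ e') (hd : d < m)
    (hgapAe : A ≠ e' → m ≤ gp e' A)
    (h1 : gp x A ≤ d) (hx : x ∈ arcSet s' e') : A ∈ arcSet s' e' := by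
  by_cases hAs : A = s'
  · subst hAs; exact mem_arcSet_left _ _
  by_cases hAe : A = e'
  · subst hAe; exact mem_arcSet_right _ _
  rw [mem_arcSet_iff hse] at hx ⊢
  rcases gp_cocycle s' x A with hc | hc
  · by_contra hcon
    have hgt : gp s' e' < gp s' A := lt_of_not_ge hcon
    rcases gp_cocycle s' e' A with hc2 | hc2
    · linarith [hgapAe hAe]
    · linarith [gp_lt_one e' A]
  · have h01 : gp x A ≤ 1 := le_of_lt (gp_lt_one x A)
    linarith

end CloseLemmas


set_option maxHeartbeats 3000000 in
lemma phi_step [Nonempty V] (htw : NoTwins G) (hun : NoUniversal G) (hm : IsCAModel G ψ) :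
    ∃ ψ' : V → Circle1 × Circle1, IsCAModel G ψ' ∧
      (∀ w, arcPts (ψ w) ⊆ arcPts (ψ' w)) ∧
      (∀ u v : V, u ≠ v → cnbr G u ⊆ cnbr G v → arcPts (ψ' u) ⊆ arcPts (ψ' v)) := by
  classical
  obtain ⟨m, hm0, hm1, hmle⟩ := exists_mgap hm.1
  choose Af Bf hAep hBep hABne hUA using fun v => union_arc hun hm v
  have hgap : ∀ {e e' : Circle1}, (∃ p : V × Bool, lep ψ p = e) → (∃ p : V × Bool, lep ψ p = e') →
      e ≠ e' → m ≤ gp e e' ∧ m ≤ gp e' e := by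
    rintro e e' ⟨p, rfl⟩ ⟨q, rfl⟩ hne
    exact ⟨hmle p q hne, hmle q p (Ne.symm hne)⟩
  -- the δ function
  set n := Fintype.card V with hn
  have hidxlt : ∀ v : V, ((Fintype.equivFin V) v : ℕ) < n := fun v => ((Fintype.equivFin V) v).2
  set rk : V → ℕ := fun v => (Finset.univ.filter (fun u => cnbr G u ⊂ cnbr G v)).card with hrk
  have hrkle : ∀ v, rk v ≤ n := by
    intro v
    calc rk v ≤ Finset.univ.card := Finset.card_filter_le _ _
    _ = n := Finset.card_univ
  have hrkmono : ∀ u v : V, cnbr G u ⊂ cnbr G v → rk u < rk v := by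
    intro u v h
    apply Finset.card_lt_card
    rw [Finset.ssubset_iff_of_subset]
    · refine ⟨u, ?_, ?_⟩
      · simp only [Finset.mem_filter]; exact ⟨Finset.mem_univ _, h⟩
      · simp only [Finset.mem_filter, not_and]
        intro _
        exact fun hc => (ssubset_irrefl _) hc
    · intro w hw
      simp only [Finset.mem_filter] at hw ⊢
      exact ⟨Finset.mem_univ _, hw.2.trans h⟩
  set D : V → ℕ := fun v => (rk v + 1) * (n + 2) + (((Fintype.equivFin V) v : ℕ) + 1) with hD
  have hDlt : ∀ v, D v < (n + 2) * (n + 2) := by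
    intro v
    have h1 := hrkle v
    have h2 := hidxlt v
    calc D v = (rk v + 1) * (n + 2) + (((Fintype.equivFin V) v : ℕ) + 1) := rfl
    _ < (rk v + 1) * (n + 2) + (n + 2) := by omega
    _ = (rk v + 2) * (n + 2) := by ring
    _ ≤ (n + 2) * (n + 2) := Nat.mul_le_mul_right _ (by omega)
  have hDmono : ∀ u v : V, cnbr G u ⊂ cnbr G v → D u < D v := by
    intro u v h
    have h1 := hrkmono u v h
    have h2 := hidxlt u
    calc D u = (rk u + 1) * (n + 2) + (((Fintype.equivFin V) u : ℕ) + 1) := rfl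
    _ < (rk u + 1) * (n + 2) + (n + 2) := by omega
    _ = (rk u + 2) * (n + 2) := by ring
    _ ≤ (rk v + 1) * (n + 2) := Nat.mul_le_mul_right _ (by omega)
    _ < D v := by simp only [hD]; omega
  have hDinj : ∀ u v : V, D u = D v → u = v := by
    intro u v h
    have h2 := hidxlt u
    have h3 := hidxlt v
    have hidx : ((Fintype.equivFin V) u : ℕ) = ((Fintype.equivFin V) v : ℕ) := by
      rcases Nat.lt_trichotomy (rk u) (rk v) with hr | hr | hr
      · exfalso
        have : D u < D v := by
          calc D u < (rk u + 1) * (n + 2) + (n + 2) := by simp only [hD]; omega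
          _ = (rk u + 2) * (n + 2) := by ring
          _ ≤ (rk v + 1) * (n + 2) := Nat.mul_le_mul_right _ (by omega)
          _ < D v := by simp only [hD]; omega
        omega
      · simp only [hD, hr] at h; omega
      · exfalso
        have : D v < D u := by
          calc D v < (rk v + 1) * (n + 2) + (n + 2) := by simp only [hD]; omega
          _ = (rk v + 2) * (n + 2) := by ring
          _ ≤ (rk u + 1) * (n + 2) := Nat.mul_le_mul_right _ (by omega)
          _ < D u := by simp only [hD]; omega
        omega
    exact (Fintype.equivFin V).injective (Fin.ext hidx)
  set δ : V → ℝ := fun v => m * (D v) / (8 * ((n : ℝ) + 2) ^ 2) with hδ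
  have hden : (0:ℝ) < 8 * ((n : ℝ) + 2) ^ 2 := by positivity
  have hδpos : ∀ v, 0 < δ v := by
    intro v
    apply div_pos _ hden
    apply mul_pos hm0
    have : 0 < D v := by simp only [hD]; omega
    exact_mod_cast this
  have hδlt : ∀ v, δ v < m / 8 := by
    intro v
    rw [hδ, div_lt_div_iff₀ hden (by norm_num : (0:ℝ) < 8)]
    have hcast : (D v : ℝ) < ((n : ℝ) + 2) ^ 2 := by
      have := hDlt v
      have : ((D v : ℕ) : ℝ) < (((n + 2) * (n + 2) : ℕ) : ℝ) := by exact_mod_cast this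
      push_cast at this
      nlinarith
    nlinarith
  have hδm : ∀ v, δ v < m := fun v => lt_trans (hδlt v) (by linarith)
  have hδmono : ∀ u v : V, cnbr G u ⊂ cnbr G v → δ u < δ v := by
    intro u v h
    have hDuv : (D u : ℝ) < (D v : ℝ) := by exact_mod_cast hDmono u v h
    simp only [hδ]
    rw [div_lt_div_iff₀ hden hden]
    nlinarith [mul_pos (mul_pos hm0 (sub_pos.mpr hDuv)) hden]
  have hδinj : ∀ u v : V, δ u = δ v → u = v := by
    intro u v h
    apply hDinj
    simp only [hδ] at h
    rw [div_eq_div_iff (ne_of_gt hden) (ne_of_gt hden)] at h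
    have h8 := mul_right_cancel₀ (ne_of_gt hden) h
    have h9 : (D u : ℝ) = (D v : ℝ) := mul_left_cancel₀ (ne_of_gt hm0) h8
    exact_mod_cast h9
  -- the cut points
  set zf : V → Circle1 := fun v => pm (Bf v) (m / 2) with hzf
  have hz1 : ∀ v, gp (Bf v) (zf v) = m / 2 := fun v => gp_pm _ (by linarith) (by linarith)
  have hzB : ∀ v, gp (zf v) (Bf v) = 1 - m / 2 := by
    intro v
    have hne : Bf v ≠ zf v := by
      intro h
      have h2 := hz1 v
      rw [← h, gp_self] at h2
      linarith
    have h3 := gp_anti hne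
    rw [hz1 v] at h3
    linarith
  have hmargin : ∀ (v : V) (e : Circle1), (∃ p : V × Bool, lep ψ p = e) →
      m / 2 ≤ gp (zf v) e ∧ gp (zf v) e ≤ 1 - m / 2 := by
    intro v e hep
    by_cases hp : e = Bf v
    · rw [hp, hzB v]; constructor <;> linarith
    · have hg := hgap (hBep v) hep (fun h => hp h.symm)
      have hanti : gp (Bf v) e + gp e (Bf v) = 1 := gp_anti (fun h => hp h.symm)
      rcases gp_cocycle (Bf v) (zf v) e with hc | hc
      · rw [hz1 v] at hc
        constructor <;> linarith [hg.1, hg.2]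
      · rw [hz1 v] at hc
        exfalso
        have := gp_lt_one (zf v) e
        linarith [hg.1]
  have hSb : ∀ v, m / 2 ≤ gp (zf v) (Af v) ∧ gp (zf v) (Af v) ≤ 1 - m / 2 :=
    fun v => hmargin v (Af v) (hAep v)
  have hSE : ∀ v, gp (zf v) (Af v) < gp (zf v) (Bf v) := by
    intro v
    rw [hzB v]
    rcases lt_or_eq_of_le (hSb v).2 with h | h
    · exact h
    · exfalso
      apply hABne v
      apply gp_inj (a := zf v)
      rw [h, hzB v]
  -- the new model
  set ψ' : V → Circle1 × Circle1 :=
    fun v => (pm (zf v) (gp (zf v) (Af v) - δ v), pm (zf v) (1 - m / 2 + δ v)) with hψ'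
  have hc1 : ∀ v, gp (zf v) ((ψ' v).1) = gp (zf v) (Af v) - δ v := by
    intro v
    apply gp_pm
    · linarith [(hSb v).1, hδlt v, hm0]
    · linarith [(hSb v).2, hδpos v, hm0]
  have hc2 : ∀ v, gp (zf v) ((ψ' v).2) = 1 - m / 2 + δ v := by
    intro v
    apply gp_pm
    · linarith [hδpos v, hm1]
    · linarith [hδlt v, hm0]
  have hne12 : ∀ v, (ψ' v).1 ≠ (ψ' v).2 := by
    intro v h
    have h2 := hc1 v
    rw [h, hc2 v] at h2
    linarith [(hSb v).2, hδpos v, hδlt v, hm0]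
  have hmem' : ∀ (v : V) (x : Circle1), x ∈ arcPts (ψ' v) ↔
      gp (zf v) (Af v) - δ v ≤ gp (zf v) x ∧ gp (zf v) x ≤ 1 - m / 2 + δ v := by
    intro v x
    rw [arcPts_eq, mem_arcSet_frame (zf v) (hne12 v) x, hc1 v, hc2 v,
      if_pos (by linarith [(hSb v).2, hδpos v, hδlt v] :
        gp (zf v) (Af v) - δ v ≤ 1 - m / 2 + δ v)]
  have hUmem : ∀ (v : V) (x : Circle1), x ∈ arcSet (Af v) (Bf v) ↔
      gp (zf v) (Af v) ≤ gp (zf v) x ∧ gp (zf v) x ≤ 1 - m / 2 := by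
    intro v x
    rw [mem_arcSet_frame (zf v) (hABne v) x, hzB v, if_pos (hSb v).2]
  have hfB : ∀ (v : V) (x : Circle1), gp (Bf v) x ≤ δ v ↔
      1 - m / 2 ≤ gp (zf v) x ∧ gp (zf v) x ≤ 1 - m / 2 + δ v := by
    intro v x
    rcases gp_cocycle (zf v) (Bf v) x with hc | hc
    · rw [hzB v] at hc
      constructor
      · intro h
        constructor <;> linarith [gp_nonneg (Bf v) x]
      · rintro ⟨h1, h2⟩; linarith
    · rw [hzB v] at hc
      constructor
      · intro h
        exfalso; linarith [gp_nonneg (zf v) x, hδlt v, hm0]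
      · rintro ⟨h1, h2⟩
        exfalso; linarith [gp_lt_one (Bf v) x]
  have hfA : ∀ (v : V) (x : Circle1), gp x (Af v) ≤ δ v ↔
      gp (zf v) (Af v) - δ v ≤ gp (zf v) x ∧ gp (zf v) x ≤ gp (zf v) (Af v) := by
    intro v x
    rcases gp_cocycle (zf v) x (Af v) with hc | hc
    · constructor
      · intro h; constructor <;> linarith [gp_nonneg x (Af v)]
      · rintro ⟨h1, h2⟩; linarith
    · constructor
      · intro h
        exfalso
        linarith [gp_lt_one (zf v) x, (hSb v).1, hδlt v, hm0]
      · rintro ⟨h1, h2⟩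
        exfalso
        linarith [gp_lt_one x (Af v)]
  have hdecomp : ∀ (v : V) (x : Circle1), x ∈ arcPts (ψ' v) ↔
      (x ∈ arcSet (Af v) (Bf v) ∨ gp (Bf v) x ≤ δ v ∨ gp x (Af v) ≤ δ v) := by
    intro v x
    rw [hmem' v x, hUmem v x, hfB v x, hfA v x]
    constructor
    · rintro ⟨h1, h2⟩
      rcases le_or_gt (gp (zf v) (Af v)) (gp (zf v) x) with h3 | h3
      · rcases le_or_gt (gp (zf v) x) (1 - m / 2) with h4 | h4
        · exact Or.inl ⟨h3, h4⟩
        · exact Or.inr (Or.inl ⟨le_of_lt h4, h2⟩)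
      · exact Or.inr (Or.inr ⟨h1, le_of_lt h3⟩)
    · rintro (⟨h1, h2⟩ | ⟨h1, h2⟩ | ⟨h1, h2⟩)
      · constructor <;> linarith [hδpos v]
      · constructor <;> linarith [(hSb v).2, hδpos v]
      · constructor <;> linarith [hδpos v, (hSb v).2, hδlt v, hm0]
  have hgrow : ∀ w, arcPts (ψ w) ⊆ arcPts (ψ' w) := by
    intro w x hx
    rw [hdecomp w x]
    exact Or.inl ((hUA w x).mpr ⟨w, subset_refl _, hx⟩)
  have hBin : ∀ v, Bf v ∈ arcSet (Af v) (Bf v) := fun v => mem_arcSet_right _ _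
  have hAin : ∀ v, Af v ∈ arcSet (Af v) (Bf v) := fun v => mem_arcSet_left _ _
  have hchain : ∀ u v : V, (∃ y, y ∈ arcSet (Af u) (Bf u) ∧ y ∈ arcSet (Af v) (Bf v)) →
      u = v ∨ G.Adj u v := by
    rintro u v ⟨y, hy1, hy2⟩
    obtain ⟨w1, hw1, hyw1⟩ := (hUA u y).mp hy1
    obtain ⟨w2, hw2, hyw2⟩ := (hUA v y).mp hy2
    have h12 : w2 ∈ cnbr G w1 := by
      by_cases h : w1 = w2
      · exact h ▸ self_mem_cnbr w1
      · exact mem_cnbr_of_adj ((hm.2 w1 w2 h).mpr ⟨y, hyw1, hyw2⟩)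
    have hu2 : w2 ∈ cnbr G u := hw1 h12
    have hu2' : u ∈ cnbr G w2 := by
      rcases mem_cnbr.mp hu2 with h | h
      · exact h ▸ self_mem_cnbr w2
      · exact mem_cnbr_of_adj (G.adj_symm h)
    have hfin := hw2 hu2'
    rcases mem_cnbr.mp hfin with h | h
    · exact Or.inl h
    · exact Or.inr (G.adj_symm h)
  have habsB : ∀ u v : V, ∀ x, gp (Bf u) x ≤ δ u → x ∈ arcSet (Af v) (Bf v) →
      Bf u ∈ arcSet (Af v) (Bf v) := by
    intro u v x h1 h2
    obtain ⟨w, hw, hxw⟩ := (hUA v x).mp h2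
    apply (hUA v (Bf u)).mpr
    refine ⟨w, hw, ?_⟩
    exact absorb_B (ep_own hm.1 w) (hδm u)
      (fun h => (hgap (hBep u) ⟨(w, false), rfl⟩ h).1) h1 hxw
  have habsA : ∀ u v : V, ∀ x, gp x (Af u) ≤ δ u → x ∈ arcSet (Af v) (Bf v) →
      Af u ∈ arcSet (Af v) (Bf v) := by
    intro u v x h1 h2
    obtain ⟨w, hw, hxw⟩ := (hUA v x).mp h2
    apply (hUA v (Af u)).mpr
    refine ⟨w, hw, ?_⟩
    exact absorb_A (ep_own hm.1 w) (hδm u)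
      (fun h => (hgap ⟨(w, true), rfl⟩ (hAep u) (Ne.symm h)).1) h1 hxw
  have hcommon : ∀ u v : V, ∀ x, x ∈ arcPts (ψ' u) → x ∈ arcPts (ψ' v) →
      ∃ y, y ∈ arcSet (Af u) (Bf u) ∧ y ∈ arcSet (Af v) (Bf v) := by
    intro u v x hxu hxv
    rw [hdecomp u x] at hxu
    rw [hdecomp v x] at hxv
    rcases hxu with h1 | h1 | h1 <;> rcases hxv with h2 | h2 | h2
    · exact ⟨x, h1, h2⟩
    · exact ⟨Bf v, habsB v u x h2 h1, hBin v⟩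
    · exact ⟨Af v, habsA v u x h2 h1, hAin v⟩
    · exact ⟨Bf u, hBin u, habsB u v x h1 h2⟩
    · have heq : Bf u = Bf v := close_BB (hδm u) (hδm v)
        (fun hne => hgap (hBep u) (hBep v) hne) h1 h2
      exact ⟨Bf u, hBin u, by rw [heq]; exact hBin v⟩
    · have heq : Bf u = Af v := close_BA (by linarith [hδlt u, hδlt v, hm0])
        (fun hne => hgap (hBep u) (hAep v) hne) h1 h2
      exact ⟨Bf u, hBin u, by rw [heq]; exact hAin v⟩
    · exact ⟨Af u, hAin u, habsA u v x h1 h2⟩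
    · have heq : Bf v = Af u := close_BA (by linarith [hδlt u, hδlt v, hm0])
        (fun hne => hgap (hBep v) (hAep u) hne) h2 h1
      exact ⟨Af u, hAin u, by rw [← heq]; exact hBin v⟩
    · have heq : Af u = Af v := close_AA (hδm u) (hδm v)
        (fun hne => hgap (hAep u) (hAep v) hne) h1 h2
      exact ⟨Af u, hAin u, by rw [heq]; exact hAin v⟩
  have hmodel' : ∀ u v : V, u ≠ v →
      (G.Adj u v ↔ (arcPts (ψ' u) ∩ arcPts (ψ' v)).Nonempty) := by
    intro u v hne
    constructor
    · intro h
      obtain ⟨x, hx1, hx2⟩ := (hm.2 u v hne).mp h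
      exact ⟨x, hgrow u hx1, hgrow v hx2⟩
    · rintro ⟨x, hx1, hx2⟩
      rcases hchain u v (hcommon u v x hx1 hx2) with h | h
      · exact absurd h hne
      · exact h
  have hfix : ∀ u v : V, u ≠ v → cnbr G u ⊆ cnbr G v → arcPts (ψ' u) ⊆ arcPts (ψ' v) := by
    intro u v hne hsub x hx
    have hss : cnbr G u ⊂ cnbr G v := ssubset_of_subset_of_ne hsub (htw u v hne)
    have hδuv : δ u < δ v := hδmono u v hss
    rw [hdecomp u x] at hx
    rw [hmem' v x]
    rcases hx with h1 | h1 | h1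
    · have hxx : x ∈ arcSet (Af v) (Bf v) := by
        obtain ⟨w, hw, hxw⟩ := (hUA u x).mp h1
        exact (hUA v x).mpr ⟨w, subset_trans hw hsub, hxw⟩
      rw [hUmem v x] at hxx
      constructor <;> linarith [hxx.1, hxx.2, hδpos v]
    · have hBuv : Bf u ∈ arcSet (Af v) (Bf v) := by
        obtain ⟨w, hw, hxw⟩ := (hUA u (Bf u)).mp (hBin u)
        exact (hUA v (Bf u)).mpr ⟨w, subset_trans hw hsub, hxw⟩
      rw [hUmem v (Bf u)] at hBuv
      rcases gp_cocycle (zf v) (Bf u) x with hc | hc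
      · constructor
        · linarith [hBuv.1, gp_nonneg (Bf u) x, hδpos v]
        · by_cases hBB : Bf u = Bf v
          · rw [hBB] at hc h1
            linarith [hzB v]
          · have hgBB : m ≤ gp (Bf u) (Bf v) := (hgap (hBep u) (hBep v) hBB).1
            have hle : gp (zf v) (Bf u) ≤ gp (zf v) (Bf v) := by
              rw [hzB v]; exact hBuv.2
            have hsubeq : gp (Bf u) (Bf v) = gp (zf v) (Bf v) - gp (zf v) (Bf u) :=
              gp_eq_sub hle
            have hmd := hδm u
            linarith [hzB v, hδpos v]
      · exfalso
        linarith [hBuv.2, gp_nonneg (zf v) x, hδlt u, hm0]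
    · have hAuv : Af u ∈ arcSet (Af v) (Bf v) := by
        obtain ⟨w, hw, hxw⟩ := (hUA u (Af u)).mp (hAin u)
        exact (hUA v (Af u)).mpr ⟨w, subset_trans hw hsub, hxw⟩
      rw [hUmem v (Af u)] at hAuv
      rcases gp_cocycle (zf v) x (Af u) with hc | hc
      · constructor
        · by_cases hAA : Af u = Af v
          · rw [hAA] at hc h1
            linarith
          · have hgAA : m ≤ gp (Af v) (Af u) :=
              (hgap (hAep u) (hAep v) hAA).2
            have hsubeq : gp (Af v) (Af u) = gp (zf v) (Af u) - gp (zf v) (Af v) :=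
              gp_eq_sub hAuv.1
            have hmd := hδm u
            linarith [hδpos v]
        · linarith [hAuv.2, gp_nonneg x (Af u), hδpos v]
      · exfalso
        linarith [gp_lt_one (zf v) x, hAuv.1, (hSb v).1, hδlt u, hm0]
  have hgpB' : ∀ v, gp (Bf v) ((ψ' v).2) = δ v := by
    intro v
    have h1 : gp (zf v) (Bf v) ≤ gp (zf v) ((ψ' v).2) := by
      rw [hzB v, hc2 v]; linarith [hδpos v]
    have h2 := gp_eq_sub h1
    rw [hzB v, hc2 v] at h2
    linarith
  have hgpA' : ∀ v, gp ((ψ' v).1) (Af v) = δ v := by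
    intro v
    have h1 : gp (zf v) ((ψ' v).1) ≤ gp (zf v) (Af v) := by
      rw [hc1 v]; linarith [hδpos v]
    have h2 := gp_eq_sub h1
    rw [hc1 v] at h2
    linarith
  have hdist : DistinctEndpointsOn Set.univ ψ' := by
    rintro ⟨pv, pb⟩ - ⟨qv, qb⟩ - heq
    cases pb <;> cases qb
    · -- false false
      have h1 : gp (lep ψ' (pv, false)) (Af pv) = δ pv := hgpA' pv
      have h2 : gp (lep ψ' (qv, false)) (Af qv) = δ qv := hgpA' qv
      rw [heq] at h1
      have hAA : Af pv = Af qv := close_AA (hδm pv) (hδm qv)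
        (fun hne => hgap (hAep pv) (hAep qv) hne) (le_of_eq h1) (le_of_eq h2)
      have hδeq : δ pv = δ qv := by rw [← h1, ← h2, hAA]
      rw [hδinj pv qv hδeq]
    · -- false true
      exfalso
      have h1 : gp (lep ψ' (qv, true)) (Af pv) = δ pv := by rw [← heq]; exact hgpA' pv
      have h2 : gp (Bf qv) (lep ψ' (qv, true)) = δ qv := hgpB' qv
      have hBA : Bf qv = Af pv := close_BA (by linarith [hδlt pv, hδlt qv, hm0])
        (fun hne => hgap (hBep qv) (hAep pv) hne) (le_of_eq h2) (le_of_eq h1)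
      rcases gp_cocycle (Bf qv) (lep ψ' (qv, true)) (Af pv) with hc | hc
      · rw [h1, h2, ← hBA, gp_self] at hc
        linarith [hδpos pv, hδpos qv]
      · rw [h1, h2, ← hBA, gp_self] at hc
        linarith [hδlt pv, hδlt qv, hm0]
    · -- true false
      exfalso
      have h1 : gp (lep ψ' (pv, true)) (Af qv) = δ qv := by rw [heq]; exact hgpA' qv
      have h2 : gp (Bf pv) (lep ψ' (pv, true)) = δ pv := hgpB' pv
      have hBA : Bf pv = Af qv := close_BA (by linarith [hδlt pv, hδlt qv, hm0])
        (fun hne => hgap (hBep pv) (hAep qv) hne) (le_of_eq h2) (le_of_eq h1)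
      rcases gp_cocycle (Bf pv) (lep ψ' (pv, true)) (Af qv) with hc | hc
      · rw [h1, h2, ← hBA, gp_self] at hc
        linarith [hδpos pv, hδpos qv]
      · rw [h1, h2, ← hBA, gp_self] at hc
        linarith [hδlt pv, hδlt qv, hm0]
    · -- true true
      have h1 : gp (Bf pv) (lep ψ' (pv, true)) = δ pv := hgpB' pv
      have h2 : gp (Bf qv) (lep ψ' (pv, true)) = δ qv := by rw [heq]; exact hgpB' qv
      have hBB : Bf pv = Bf qv := close_BB (hδm pv) (hδm qv)
        (fun hne => hgap (hBep pv) (hBep qv) hne) (le_of_eq h1) (le_of_eq h2)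
      have hδeq : δ pv = δ qv := by rw [← h1, ← h2, hBB]
      rw [hδinj pv qv hδeq]
  exact ⟨ψ', ⟨hdist, hmodel'⟩, hgrow, hfix⟩


lemma frame_of_not_mem {z a b : Circle1} (hab : a ≠ b) (hz : z ∉ arcSet a b) :
    gp z a ≤ gp z b ∧ 0 < gp z a ∧
      ∀ x, (x ∈ arcSet a b ↔ gp z a ≤ gp z x ∧ gp z x ≤ gp z b) := by
  rcases le_or_gt (gp z a) (gp z b) with hle | hlt
  · refine ⟨hle, ?_, ?_⟩
    · by_contra hc
      apply hz
      rw [mem_arcSet_frame z hab z, if_pos hle, gp_self]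
      exact ⟨le_of_not_gt hc, gp_nonneg _ _⟩
    · intro x
      rw [mem_arcSet_frame z hab x, if_pos hle]
  · exfalso
    apply hz
    rw [mem_arcSet_frame z hab z, if_neg (not_le.mpr hlt), gp_self]
    exact Or.inr (gp_nonneg _ _)

lemma frame_of_not_mem' {z : Circle1} {c : Circle1 × Circle1} (hab : c.1 ≠ c.2)
    (hz : z ∉ arcPts c) :
    gp z c.1 ≤ gp z c.2 ∧ 0 < gp z c.1 ∧
      ∀ x, (x ∈ arcPts c ↔ gp z c.1 ≤ gp z x ∧ gp z x ≤ gp z c.2) :=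
  frame_of_not_mem hab hz

lemma cc_symm {v u : V} (h : Cc G v u) : Cc G u v := by
  obtain ⟨h1, h2, h3, h4, h5⟩ := h
  exact ⟨Ne.symm h1, G.adj_symm h2, by rw [Set.union_comm]; exact h3, h5, h4⟩

set_option maxHeartbeats 3000000 in
lemma cc_core (htw : NoTwins G) (hun : NoUniversal G) (hm : IsCAModel G ψ)
    (hfix : ∀ u v : V, u ≠ v → cnbr G u ⊆ cnbr G v → arcPts (ψ u) ⊆ arcPts (ψ v))
    {v₀ u₀ : V} (hcc : Cc G v₀ u₀) {z : Circle1}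
    (hzv : z ∉ arcPts (ψ v₀)) (hzu : z ∉ arcPts (ψ u₀))
    (hord : gp z ((ψ v₀).1) ≤ gp z ((ψ u₀).1)) :
    ∃ ψ' : V → Circle1 × Circle1, IsCAModel G ψ' ∧
      (∀ w, arcPts (ψ w) ⊆ arcPts (ψ' w)) ∧
      arcPts (ψ' v₀) ∪ arcPts (ψ' u₀) = Set.univ := by
  classical
  obtain ⟨hne, hadj, huniv, hL, hR⟩ := hcc
  obtain ⟨hab, hpq, hap, haq, hbp, hbq⟩ := ep_six hm.1 hne
  obtain ⟨hve, hvs, hvmem⟩ := frame_of_not_mem' hab hzv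
  obtain ⟨hue, hus, humem⟩ := frame_of_not_mem' hpq hzu
  -- notation: s = c (ψ v₀).1, e = c (ψ v₀).2, s' = c (ψ u₀).1, e' = c (ψ u₀).2
  have hss' : gp z ((ψ v₀).1) < gp z ((ψ u₀).1) := lt_of_le_of_ne hord (gp_ne hap)
  have hs'e : gp z ((ψ u₀).1) ≤ gp z ((ψ v₀).2) := by
    obtain ⟨y, hy1, hy2⟩ := (hm.2 v₀ u₀ hne).mp hadj
    rw [hvmem y] at hy1
    rw [humem y] at hy2
    linarith [hy1.2, hy2.1]
  have hs'e_s : gp z ((ψ u₀).1) < gp z ((ψ v₀).2) := lt_of_le_of_ne hs'e (gp_ne (Ne.symm hbp))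
  have hee' : gp z ((ψ v₀).2) < gp z ((ψ u₀).2) := by
    rcases lt_or_ge (gp z ((ψ v₀).2)) (gp z ((ψ u₀).2)) with h | h
    · exact h
    · exfalso
      have hsub : arcPts (ψ u₀) ⊆ arcPts (ψ v₀) := by
        intro x hx
        rw [humem x] at hx
        rw [hvmem x]
        constructor <;> linarith [hx.1, hx.2]
      have hcs := sound_cs htw hm hne hsub
      apply hun v₀
      apply Set.eq_univ_of_forall
      intro w
      have : w ∈ cnbr G v₀ ∪ cnbr G u₀ := huniv ▸ Set.mem_univ w
      rcases this with h' | h'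
      · exact h'
      · exact hcs.2.1 h'
  have he'1 : gp z ((ψ u₀).2) < 1 := gp_lt_one _ _
  -- choose the two new cut coordinates
  set C : Finset ℝ := Finset.univ.image (fun p : V × Bool => gp z (lep ψ p)) with hC
  obtain ⟨γ₁, hγ₁l, hγ₁u, hγ₁C⟩ := exists_avoid C he'1
  obtain ⟨γ₂, hγ₂l, hγ₂u, hγ₂C⟩ := exists_avoid C (show γ₁ < 1 from hγ₁u)
  have hγ₁0 : 0 ≤ γ₁ := le_trans (gp_nonneg _ _) (le_of_lt hγ₁l)
  have hγ₂0 : 0 ≤ γ₂ := le_trans hγ₁0 (le_of_lt hγ₂l)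
  have hCmem : ∀ p : V × Bool, gp z (lep ψ p) ∈ C := by
    intro p
    rw [hC, Finset.mem_image]
    exact ⟨p, Finset.mem_univ _, rfl⟩
  -- the new model
  set ψ' : V → Circle1 × Circle1 := fun w =>
    if w = v₀ then (pm z γ₁, (ψ v₀).2)
    else if w = u₀ then ((ψ u₀).1, pm z γ₂) else ψ w with hψ'
  have hv' : ψ' v₀ = (pm z γ₁, (ψ v₀).2) := by simp [hψ']
  have hu' : ψ' u₀ = ((ψ u₀).1, pm z γ₂) := by simp [hψ', hne, Ne.symm hne]
  have hw' : ∀ w, w ≠ v₀ → w ≠ u₀ → ψ' w = ψ w := by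
    intro w h1 h2; simp [hψ', h1, h2]
  have hcγ₁ : gp z (pm z γ₁) = γ₁ := gp_pm z hγ₁0 hγ₁u
  have hcγ₂ : gp z (pm z γ₂) = γ₂ := gp_pm z hγ₂0 hγ₂u
  have hγ₁e : γ₁ ≠ gp z ((ψ v₀).2) := by
    intro h
    apply hγ₁C
    rw [h]
    exact hCmem (v₀, true)
  -- membership in the new arcs
  have hv'mem : ∀ x, x ∈ arcPts (ψ' v₀) ↔ (γ₁ ≤ gp z x ∨ gp z x ≤ gp z ((ψ v₀).2)) := by
    intro x
    rw [hv', arcPts_eq]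
    have hne1 : pm z γ₁ ≠ (ψ v₀).2 := by
      intro h
      apply hγ₁e
      rw [← hcγ₁, h]
    rw [mem_arcSet_frame z hne1 x, hcγ₁,
      if_neg (not_le.mpr (by linarith : gp z ((ψ v₀).2) < γ₁))]
  have hu'mem : ∀ x, x ∈ arcPts (ψ' u₀) ↔
      (gp z ((ψ u₀).1) ≤ gp z x ∧ gp z x ≤ γ₂) := by
    intro x
    rw [hu', arcPts_eq]
    have hne2 : (ψ u₀).1 ≠ pm z γ₂ := by
      intro h
      apply hγ₂C
      rw [← hcγ₂, ← h]
      exact hCmem (u₀, false)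
    rw [mem_arcSet_frame z hne2 x, hcγ₂, if_pos (by linarith : gp z ((ψ u₀).1) ≤ γ₂)]
  -- growth
  have hgrow : ∀ w, arcPts (ψ w) ⊆ arcPts (ψ' w) := by
    intro w x hx
    by_cases h1 : w = v₀
    · subst h1
      rw [hv'mem x]
      rw [hvmem x] at hx
      exact Or.inr hx.2
    by_cases h2 : w = u₀
    · subst h2
      rw [hu'mem x]
      rw [humem x] at hx
      exact ⟨hx.1, by linarith [hx.2]⟩
    · rw [hw' w h1 h2]; exact hx
  -- cover
  have hcover : arcPts (ψ' v₀) ∪ arcPts (ψ' u₀) = Set.univ := by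
    apply Set.eq_univ_of_forall
    intro x
    rcases le_or_gt (gp z x) (gp z ((ψ v₀).2)) with h | h
    · exact Or.inl ((hv'mem x).mpr (Or.inr h))
    · rcases le_or_gt γ₁ (gp z x) with h2 | h2
      · exact Or.inl ((hv'mem x).mpr (Or.inl h2))
      · exact Or.inr ((hu'mem x).mpr ⟨by linarith, by linarith⟩)
  -- the gap lemma
  have hgapw : ∀ w t, w ≠ v₀ → w ≠ u₀ → t ∈ arcPts (ψ w) →
      (gp z t < gp z ((ψ v₀).1) ∨ gp z ((ψ u₀).2) < gp z t) →
      G.Adj v₀ w ∧ G.Adj u₀ w := by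
    intro w t hwv hwu ht hgap
    have hwmem : w ∈ cnbr G v₀ ∪ cnbr G u₀ := huniv ▸ Set.mem_univ w
    have hv : w ∈ cnbr G v₀ := by
      by_contra hc
      have hw2 : w ∈ cnbr G u₀ := by
        rcases hwmem with h | h
        · exact absurd h hc
        · exact h
      have hsubw : cnbr G w ⊂ cnbr G u₀ := hR w ⟨hw2, hc⟩
      have := hfix w u₀ hwu hsubw.1 ht
      rw [humem t] at this
      rcases hgap with h | h
      · linarith [this.1]
      · linarith [this.2]
    have hu : w ∈ cnbr G u₀ := by
      by_contra hc
      have hsubw : cnbr G w ⊂ cnbr G v₀ := hL w ⟨hv, hc⟩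
      have := hfix w v₀ hwv hsubw.1 ht
      rw [hvmem t] at this
      rcases hgap with h | h
      · linarith [this.1]
      · linarith [this.2]
    constructor
    · rcases mem_cnbr.mp hv with h | h
      · exact absurd h hwv
      · exact h
    · rcases mem_cnbr.mp hu with h | h
      · exact absurd h hwu
      · exact h
  -- disjointness helpers
  have hdisjv : ∀ w, w ≠ v₀ → w ≠ u₀ → ¬ G.Adj v₀ w →
      arcPts (ψ' v₀) ∩ arcPts (ψ' w) = ∅ := by
    intro w hwv hwu hnadj
    rw [hw' w hwv hwu]
    apply Set.eq_empty_iff_forall_notMem.mpr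
    rintro t ⟨ht1, ht2⟩
    rw [hv'mem t] at ht1
    by_cases hold : t ∈ arcPts (ψ v₀)
    · have : (arcPts (ψ v₀) ∩ arcPts (ψ w)).Nonempty := ⟨t, hold, ht2⟩
      exact hnadj ((hm.2 v₀ w (Ne.symm hwv)).mpr this)
    · rw [hvmem t] at hold
      push_neg at hold
      have hgap : gp z t < gp z ((ψ v₀).1) ∨ gp z ((ψ u₀).2) < gp z t := by
        rcases ht1 with h | h
        · right; linarith
        · left
          rcases lt_or_ge (gp z t) (gp z ((ψ v₀).1)) with h2 | h2
          · exact h2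
          · exact absurd (hold h2) (not_lt.mpr h)
      exact hnadj (hgapw w t hwv hwu ht2 hgap).1
  have hdisju : ∀ w, w ≠ v₀ → w ≠ u₀ → ¬ G.Adj u₀ w →
      arcPts (ψ' u₀) ∩ arcPts (ψ' w) = ∅ := by
    intro w hwv hwu hnadj
    rw [hw' w hwv hwu]
    apply Set.eq_empty_iff_forall_notMem.mpr
    rintro t ⟨ht1, ht2⟩
    rw [hu'mem t] at ht1
    by_cases hold : t ∈ arcPts (ψ u₀)
    · exact hnadj ((hm.2 u₀ w (Ne.symm hwu)).mpr ⟨t, hold, ht2⟩)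
    · rw [humem t] at hold
      push_neg at hold
      have hgap : gp z t < gp z ((ψ v₀).1) ∨ gp z ((ψ u₀).2) < gp z t :=
        Or.inr (hold ht1.1)
      exact hnadj (hgapw w t hwv hwu ht2 hgap).2
  have hlep : ∀ p : V × Bool, p ≠ (v₀, false) → p ≠ (u₀, true) → lep ψ' p = lep ψ p := by
    rintro ⟨w, b⟩ h1 h2
    by_cases hwv : w = v₀
    · subst hwv
      cases b
      · exact absurd rfl h1
      · show (ψ' w).2 = (ψ w).2
        rw [hv']
    · by_cases hwu : w = u₀
      · subst hwu
        cases b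
        · show (ψ' w).1 = (ψ w).1
          rw [hu']
        · exact absurd rfl h2
      · cases b
        · show (ψ' w).1 = (ψ w).1
          rw [hw' w hwv hwu]
        · show (ψ' w).2 = (ψ w).2
          rw [hw' w hwv hwu]
  have hlv : lep ψ' (v₀, false) = pm z γ₁ := by
    show (ψ' v₀).1 = _
    rw [hv']
  have hlu : lep ψ' (u₀, true) = pm z γ₂ := by
    show (ψ' u₀).2 = _
    rw [hu']
  have hdist : DistinctEndpointsOn Set.univ ψ' := by
    intro p _ q _ heq
    by_cases hp1 : p = (v₀, false) <;> by_cases hq1 : q = (v₀, false)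
    · rw [hp1, hq1]
    · exfalso
      by_cases hq2 : q = (u₀, true)
      · rw [hp1, hlv, hq2, hlu] at heq
        have := pm_inj hγ₁0 hγ₁u hγ₂0 hγ₂u heq
        linarith
      · rw [hp1, hlv, hlep q hq1 hq2] at heq
        apply hγ₁C
        rw [← hcγ₁, heq]
        exact hCmem q
    · exfalso
      by_cases hp2 : p = (u₀, true)
      · rw [hq1, hlv, hp2, hlu] at heq
        have := pm_inj hγ₂0 hγ₂u hγ₁0 hγ₁u heq
        linarith
      · rw [hq1, hlv, hlep p hp1 hp2] at heq
        apply hγ₁C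
        rw [← hcγ₁, ← heq]
        exact hCmem p
    · by_cases hp2 : p = (u₀, true) <;> by_cases hq2 : q = (u₀, true)
      · rw [hp2, hq2]
      · exfalso
        rw [hp2, hlu, hlep q hq1 hq2] at heq
        apply hγ₂C
        rw [← hcγ₂, heq]
        exact hCmem q
      · exfalso
        rw [hq2, hlu, hlep p hp1 hp2] at heq
        apply hγ₂C
        rw [← hcγ₂, ← heq]
        exact hCmem p
      · rw [hlep p hp1 hp2, hlep q hq1 hq2] at heq
        exact hm.1 (Set.mem_univ _) (Set.mem_univ _) heq
  have hmodel : ∀ x y : V, x ≠ y →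
      (G.Adj x y ↔ (arcPts (ψ' x) ∩ arcPts (ψ' y)).Nonempty) := by
    intro x y hxy
    constructor
    · intro h
      obtain ⟨t, ht1, ht2⟩ := (hm.2 x y hxy).mp h
      exact ⟨t, hgrow x ht1, hgrow y ht2⟩
    · intro hne2
      by_contra hnadj
      obtain ⟨t, ht1, ht2⟩ := hne2
      by_cases hxv : x = v₀
      · subst hxv
        by_cases hyu : y = u₀
        · subst hyu; exact hnadj hadj
        · have := hdisjv y (Ne.symm hxy) hyu hnadj
          exact Set.eq_empty_iff_forall_notMem.mp this t ⟨ht1, ht2⟩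
      · by_cases hxu : x = u₀
        · subst hxu
          by_cases hyv : y = v₀
          · subst hyv; exact hnadj (G.adj_symm hadj)
          · have := hdisju y hyv (Ne.symm hxy) hnadj
            exact Set.eq_empty_iff_forall_notMem.mp this t ⟨ht1, ht2⟩
        · by_cases hyv : y = v₀
          · subst hyv
            have := hdisjv x hxv hxu (fun h => hnadj (G.adj_symm h))
            exact Set.eq_empty_iff_forall_notMem.mp this t ⟨ht2, ht1⟩
          · by_cases hyu : y = u₀
            · subst hyu
              have := hdisju x hxv hxu (fun h => hnadj (G.adj_symm h))
              exact Set.eq_empty_iff_forall_notMem.mp this t ⟨ht2, ht1⟩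
            · rw [hw' x hxv hxu] at ht1
              rw [hw' y hyv hyu] at ht2
              exact hnadj ((hm.2 x y hxy).mpr ⟨t, ht1, ht2⟩)
  exact ⟨ψ', ⟨hdist, hmodel⟩, hgrow, hcover⟩

lemma cc_step (htw : NoTwins G) (hun : NoUniversal G) (hm : IsCAModel G ψ)
    (hfix : ∀ u v : V, u ≠ v → cnbr G u ⊆ cnbr G v → arcPts (ψ u) ⊆ arcPts (ψ v))
    {v₀ u₀ : V} (hcc : Cc G v₀ u₀)
    (hnc : arcPts (ψ v₀) ∪ arcPts (ψ u₀) ≠ Set.univ) :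
    ∃ ψ' : V → Circle1 × Circle1, IsCAModel G ψ' ∧
      (∀ w, arcPts (ψ w) ⊆ arcPts (ψ' w)) ∧
      arcPts (ψ' v₀) ∪ arcPts (ψ' u₀) = Set.univ := by
  obtain ⟨z, hz⟩ := (Set.ne_univ_iff_exists_notMem _).mp hnc
  rw [Set.mem_union, not_or] at hz
  obtain ⟨hzv, hzu⟩ := hz
  rcases le_total (gp z ((ψ v₀).1)) (gp z ((ψ u₀).1)) with hord | hord
  · exact cc_core htw hun hm hfix hcc hzv hzu hord
  · obtain ⟨ψ', h1, h2, h3⟩ := cc_core htw hun hm hfix (cc_symm hcc) hzu hzv hord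
    exact ⟨ψ', h1, h2, by rw [Set.union_comm]; exact h3⟩


lemma covered_mono {ψ ψ' : V → Circle1 × Circle1}
    (hg : ∀ w, arcPts (ψ w) ⊆ arcPts (ψ' w)) {v u : V}
    (h : arcPts (ψ v) ∪ arcPts (ψ u) = Set.univ) :
    arcPts (ψ' v) ∪ arcPts (ψ' u) = Set.univ := by
  apply Set.eq_univ_of_forall
  intro x
  have hx : x ∈ arcPts (ψ v) ∪ arcPts (ψ u) := h ▸ Set.mem_univ x
  rcases hx with h1 | h1
  · exact Or.inl (hg v h1)
  · exact Or.inr (hg u h1)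

lemma normalize [Nonempty V] (htw : NoTwins G) (hun : NoUniversal G) (hm : IsCAModel G ψ) :
    ∃ ψ' : V → Circle1 × Circle1, IsGoodModel G ψ' := by
  classical
  suffices h : ∀ (N : ℕ) (ψ₁ : V → Circle1 × Circle1), IsCAModel G ψ₁ →
      (∀ u v : V, u ≠ v → cnbr G u ⊆ cnbr G v → arcPts (ψ₁ u) ⊆ arcPts (ψ₁ v)) →
      ((Finset.univ : Finset (V × V)).filter
        (fun p => Cc G p.1 p.2 ∧ arcPts (ψ₁ p.1) ∪ arcPts (ψ₁ p.2) ≠ Set.univ)).card ≤ N →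
      ∃ ψ' : V → Circle1 × Circle1, IsGoodModel G ψ' by
    obtain ⟨ψ₀, h0, _, hfix0⟩ := phi_step htw hun hm
    exact h _ ψ₀ h0 hfix0 (le_refl _)
  intro N
  induction N with
  | zero =>
    intro ψ₁ hm₁ hfix₁ hcard
    refine ⟨ψ₁, hm₁, hfix₁, ?_⟩
    intro u v hcc
    by_contra hc
    have hmem : (v, u) ∈ (Finset.univ : Finset (V × V)).filter
        (fun p => Cc G p.1 p.2 ∧ arcPts (ψ₁ p.1) ∪ arcPts (ψ₁ p.2) ≠ Set.univ) :=
      Finset.mem_filter.mpr ⟨Finset.mem_univ _, hcc, hc⟩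
    have := Finset.card_pos.mpr ⟨(v, u), hmem⟩
    omega
  | succ N ih =>
    intro ψ₁ hm₁ hfix₁ hcard
    by_cases hbad : ∃ p : V × V, Cc G p.1 p.2 ∧ arcPts (ψ₁ p.1) ∪ arcPts (ψ₁ p.2) ≠ Set.univ
    · obtain ⟨⟨v₀, u₀⟩, hcc, hnc⟩ := hbad
      obtain ⟨ψ₂, hm₂, hg₂, hcov₂⟩ := cc_step htw hun hm₁ hfix₁ hcc hnc
      obtain ⟨ψ₃, hm₃, hg₃, hfix₃⟩ := phi_step htw hun hm₂
      apply ih ψ₃ hm₃ hfix₃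
      have hsub : (Finset.univ.filter
          (fun p : V × V => Cc G p.1 p.2 ∧ arcPts (ψ₃ p.1) ∪ arcPts (ψ₃ p.2) ≠ Set.univ)) ⊆
          ((Finset.univ.filter
            (fun p : V × V => Cc G p.1 p.2 ∧
              arcPts (ψ₁ p.1) ∪ arcPts (ψ₁ p.2) ≠ Set.univ)).erase (v₀, u₀)) := by
        intro p hp
        rw [Finset.mem_filter] at hp
        rw [Finset.mem_erase, Finset.mem_filter]
        refine ⟨?_, Finset.mem_univ _, hp.2.1, ?_⟩
        · intro hpe
          apply hp.2.2
          rw [hpe]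
          exact covered_mono hg₃ hcov₂
        · intro hcov
          exact hp.2.2 (covered_mono hg₃ (covered_mono hg₂ hcov))
      have hmem : (v₀, u₀) ∈ Finset.univ.filter
          (fun p : V × V => Cc G p.1 p.2 ∧
            arcPts (ψ₁ p.1) ∪ arcPts (ψ₁ p.2) ≠ Set.univ) :=
        Finset.mem_filter.mpr ⟨Finset.mem_univ _, hcc, hnc⟩
      have h1 := Finset.card_le_card hsub
      have h2 := Finset.card_erase_of_mem hmem
      omega
    · refine ⟨ψ₁, hm₁, hfix₁, ?_⟩
      intro u v hcc
      by_contra hc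
      exact hbad ⟨(v, u), hcc, hc⟩

end Normalize






/-- A finite graph `G` with no twins and no universal vertices is a
circular-arc graph if and only if its overlap graph admits a conformal oriented
chord model. -/
theorem stmt2 {V : Type*} [Fintype V] (G : SimpleGraph V)
    (htw : NoTwins G) (hun : NoUniversal G) :
    IsCircularArc G ↔ ∃ φ : V → Circle1 × Circle1, IsConformalOn G Set.univ φ := by
  constructor
  · rintro ⟨ψ, hm⟩
    rcases isEmpty_or_nonempty V with h | h
    · refine ⟨fun _ => (0, 0), ⟨⟨?_, ?_⟩, ?_⟩⟩
      · intro p _ q _ _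
        exact (h.false p.1).elim
      · intro u _
        exact (h.false u).elim
      · intro v _
        exact (h.false v).elim
    · obtain ⟨ψ', hgood⟩ := normalize htw hun hm
      exact ⟨ψ', conformal_of_good htw hgood⟩
  · rintro ⟨φ, hconf⟩
    exact ⟨φ, ca_of_conformal hconf⟩

end CAIso
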